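/- arXiv:1904.11197 — 11 statements merged into one kernel-verified Lean document; each statement's English description precedes it below -/
import Mathlib

section
/- Let {π₁,...,πₙ} (n ≥ 2) be a (k,k-t)-SCID, S = span(π₁,...,πₙ) and I = span of all pairwise intersections πᵢ ∩ πⱼ for i < j. Then dim S + dim I ≤ n·k. -/
open Module

theorem dim_span_add_dim_int_le_nk (F V : Type*) [Field F] [Fintype F]
    [AddCommGroup V] [Module F V] [FiniteDimensional F V]
    (n k t : ℕ) (hn : 2 ≤ n) (ht : t ≤ k)
    (π : Fin n → Submodule F V) (hinj : Function.Injective π)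
    (hdim : ∀ i, finrank F ↥(π i) = k)
    (hint : ∀ i j, i ≠ j → finrank F ↥(π i ⊓ π j) = k - t) :
    finrank F ↥(⨆ i, π i) +
      finrank F ↥(⨆ i, ⨆ j, ⨆ (_ : i < j), π i ⊓ π j) ≤ n * k := by
  have key : ∀ s : Finset (Fin n),
      finrank F ↥(⨆ i ∈ s, π i) +
        finrank F ↥(⨆ i ∈ s, ⨆ j ∈ s, ⨆ (_ : i < j), π i ⊓ π j) ≤ s.card * k := by
    intro s
    induction s using Finset.induction_on with
    | empty => simp
    | @insert a s ha ih =>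
      set S := ⨆ i ∈ s, π i with hSdef
      set I := ⨆ i ∈ s, ⨆ j ∈ s, ⨆ (_ : i < j), π i ⊓ π j with hIdef
      have hS : (⨆ i ∈ insert a s, π i) = π a ⊔ S := by
        rw [Finset.iSup_insert]
      have hI : (⨆ i ∈ insert a s, ⨆ j ∈ insert a s, ⨆ (_ : i < j), π i ⊓ π j)
          ≤ I ⊔ (π a ⊓ S) := by
        refine iSup₂_le fun i hi => iSup₂_le fun j hj => iSup_le fun hij => ?_
        rcases Finset.mem_insert.mp hi with hia | hi
        · rcases Finset.mem_insert.mp hj with hja | hj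
          · exact absurd hij (by rw [hia, hja]; exact lt_irrefl _)
          · refine le_sup_of_le_right (le_inf (inf_le_left.trans (le_of_eq (by rw [hia]))) ?_)
            exact inf_le_right.trans (le_iSup₂_of_le j hj le_rfl)
        · rcases Finset.mem_insert.mp hj with hja | hj
          · refine le_sup_of_le_right (le_inf (inf_le_right.trans (le_of_eq (by rw [hja]))) ?_)
            exact inf_le_left.trans (le_iSup₂_of_le i hi le_rfl)
          · refine le_sup_of_le_left ?_
            exact le_iSup₂_of_le i hi (le_iSup₂_of_le j hj (le_iSup_of_le hij le_rfl))
      have h1 := Submodule.finrank_sup_add_finrank_inf_eq (π a) S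
      have h2 := Submodule.finrank_sup_add_finrank_inf_eq I (π a ⊓ S)
      have h3 : finrank F ↥(⨆ i ∈ insert a s, ⨆ j ∈ insert a s, ⨆ (_ : i < j), π i ⊓ π j)
          ≤ finrank F ↥(I ⊔ (π a ⊓ S)) := Submodule.finrank_mono hI
      rw [hS, Finset.card_insert_of_notMem ha, add_mul, one_mul]
      have hk := hdim a
      omega
  have hthis := key Finset.univ
  have e1 : (⨆ i ∈ Finset.univ, π i) = ⨆ i, π i :=
    le_antisymm (iSup₂_le fun i _ => le_iSup _ i)
      (iSup_le fun i => le_iSup₂_of_le i (Finset.mem_univ i) le_rfl)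
  have e2 : (⨆ i ∈ Finset.univ, ⨆ j ∈ Finset.univ, ⨆ (_ : i < j), π i ⊓ π j)
      = ⨆ i, ⨆ j, ⨆ (_ : i < j), π i ⊓ π j :=
    le_antisymm
      (iSup₂_le fun i _ => iSup₂_le fun j _ => iSup_le fun hij =>
        le_iSup_of_le i (le_iSup_of_le j (le_iSup_of_le hij le_rfl)))
      (iSup_le fun i => iSup_le fun j => iSup_le fun hij =>
        le_iSup₂_of_le i (Finset.mem_univ i)
          (le_iSup₂_of_le j (Finset.mem_univ j) (le_iSup_of_le hij le_rfl)))
  rw [e1, e2, Finset.card_univ, Fintype.card_fin] at hthis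
  exact hthis
end

section
/- Let {π₁,π₂,π₃} be a (k,k-t)-SCID, S = ⟨π₁,π₂,π₃⟩ and I = ⟨π₁∩π₂, π₁∩π₃, π₂∩π₃⟩. Then dim S + dim I ≤ 2(k+t). -/
open Module

theorem scid_three_bound (F V : Type*) [Field F] [Fintype F]
    [AddCommGroup V] [Module F V] [FiniteDimensional F V]
    (k t : ℕ) (ht : t ≤ k)
    (π₁ π₂ π₃ : Submodule F V) (h12 : π₁ ≠ π₂) (h13 : π₁ ≠ π₃) (h23 : π₂ ≠ π₃)
    (hd₁ : finrank F ↥π₁ = k) (hd₂ : finrank F ↥π₂ = k) (hd₃ : finrank F ↥π₃ = k)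
    (hi12 : finrank F ↥(π₁ ⊓ π₂) = k - t)
    (hi13 : finrank F ↥(π₁ ⊓ π₃) = k - t)
    (hi23 : finrank F ↥(π₂ ⊓ π₃) = k - t) :
    finrank F ↥(π₁ ⊔ π₂ ⊔ π₃) +
      finrank F ↥((π₁ ⊓ π₂) ⊔ (π₁ ⊓ π₃) ⊔ (π₂ ⊓ π₃)) ≤ 2 * (k + t) := by
  have hsup12 := Submodule.finrank_sup_add_finrank_inf_eq π₁ π₂
  have hsupS := Submodule.finrank_sup_add_finrank_inf_eq (π₁ ⊔ π₂) π₃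
  have hBC := Submodule.finrank_sup_add_finrank_inf_eq (π₁ ⊓ π₃) (π₂ ⊓ π₃)
  have hAB := Submodule.finrank_sup_add_finrank_inf_eq (π₁ ⊓ π₂) (π₁ ⊓ π₃)
  have hI := Submodule.finrank_sup_add_finrank_inf_eq ((π₁ ⊓ π₂) ⊔ (π₁ ⊓ π₃)) (π₂ ⊓ π₃)
  have e1 : (π₁ ⊓ π₃) ⊓ (π₂ ⊓ π₃) = π₁ ⊓ π₂ ⊓ π₃ := by
    ext x; simp only [Submodule.mem_inf]; tauto
  have e2 : (π₁ ⊓ π₂) ⊓ (π₁ ⊓ π₃) = π₁ ⊓ π₂ ⊓ π₃ := by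
    ext x; simp only [Submodule.mem_inf]; tauto
  rw [e1] at hBC
  rw [e2] at hAB
  have hTle : finrank F ↥(π₁ ⊓ π₂ ⊓ π₃) ≤
      finrank F ↥(((π₁ ⊓ π₂) ⊔ (π₁ ⊓ π₃)) ⊓ (π₂ ⊓ π₃)) :=
    Submodule.finrank_mono (le_inf (le_trans inf_le_left le_sup_left)
      (le_inf (le_trans inf_le_left inf_le_right) inf_le_right))
  have hBCle : finrank F ↥((π₁ ⊓ π₃) ⊔ (π₂ ⊓ π₃)) ≤ finrank F ↥((π₁ ⊔ π₂) ⊓ π₃) :=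
    Submodule.finrank_mono (sup_le (inf_le_inf le_sup_left le_rfl)
      (inf_le_inf le_sup_right le_rfl))
  have hABk : finrank F ↥((π₁ ⊓ π₂) ⊔ (π₁ ⊓ π₃)) ≤ k := by
    rw [← hd₁]; exact Submodule.finrank_mono (sup_le inf_le_left inf_le_left)
  rw [hd₁, hd₂] at hsup12
  rw [hd₃] at hsupS
  rw [hi12, hi13] at hAB
  rw [hi13, hi23] at hBC
  rw [hi23] at hI
  omega
end

section
/- Let {π₁,π₂,π₃} be a (k,k-t)-SCID and let ε ≥ 0 be defined by dim(π₁∩π₂∩π₃) = k - t - ε. Then the span I of the three pairwise intersections has dim I = k - t + 2ε. -/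
open Module

theorem scid_three_dim_I (F V : Type*) [Field F] [Fintype F]
    [AddCommGroup V] [Module F V] [FiniteDimensional F V]
    (k t ε : ℕ) (ht : t ≤ k)
    (π₁ π₂ π₃ : Submodule F V) (h12 : π₁ ≠ π₂) (h13 : π₁ ≠ π₃) (h23 : π₂ ≠ π₃)
    (hd₁ : finrank F ↥π₁ = k) (hd₂ : finrank F ↥π₂ = k) (hd₃ : finrank F ↥π₃ = k)
    (hi12 : finrank F ↥(π₁ ⊓ π₂) = k - t)
    (hi13 : finrank F ↥(π₁ ⊓ π₃) = k - t)
    (hi23 : finrank F ↥(π₂ ⊓ π₃) = k - t)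
    (hε : finrank F ↥(π₁ ⊓ π₂ ⊓ π₃) + ε = k - t) :
    finrank F ↥((π₁ ⊓ π₂) ⊔ (π₁ ⊓ π₃) ⊔ (π₂ ⊓ π₃)) = k - t + 2 * ε := by
  have heq1 : (π₁ ⊓ π₂) ⊓ (π₁ ⊓ π₃) = π₁ ⊓ π₂ ⊓ π₃ := by
    ext x; simp only [Submodule.mem_inf]; tauto
  have heq2 : ((π₁ ⊓ π₂) ⊔ (π₁ ⊓ π₃)) ⊓ (π₂ ⊓ π₃) = π₁ ⊓ π₂ ⊓ π₃ := by
    apply le_antisymm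
    · rw [inf_assoc]
      exact inf_le_inf_right (π₂ ⊓ π₃) (sup_le inf_le_left inf_le_left)
    · exact le_inf ((inf_le_left : π₁ ⊓ π₂ ⊓ π₃ ≤ π₁ ⊓ π₂).trans le_sup_left)
        (le_inf (inf_le_left.trans inf_le_right) inf_le_right)
  have h1 := Submodule.finrank_sup_add_finrank_inf_eq (π₁ ⊓ π₂) (π₁ ⊓ π₃)
  have h2 := Submodule.finrank_sup_add_finrank_inf_eq ((π₁ ⊓ π₂) ⊔ (π₁ ⊓ π₃)) (π₂ ⊓ π₃)
  rw [heq1] at h1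
  rw [heq2] at h2
  rw [hi12, hi13] at h1
  rw [hi23] at h2
  omega
end

section
/- Let {π₁,...,πₙ} (n ≥ 3) be a (k,k-t)-SCID, S = span(π₁,...,πₙ) and I the span of all pairwise intersections. Then dim S + dim I ≤ (n-1)·k + 2t. -/
open Module

theorem scid_bound_n_ge_three (F V : Type*) [Field F] [Fintype F]
    [AddCommGroup V] [Module F V] [FiniteDimensional F V]
    (n k t : ℕ) (hn : 3 ≤ n) (ht : t ≤ k)
    (π : Fin n → Submodule F V) (hinj : Function.Injective π)
    (hdim : ∀ i, finrank F ↥(π i) = k)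
    (hint : ∀ i j, i ≠ j → finrank F ↥(π i ⊓ π j) = k - t) :
    finrank F ↥(⨆ i, π i) +
      finrank F ↥(⨆ i, ⨆ j, ⨆ (_ : i < j), π i ⊓ π j) ≤ (n - 1) * k + 2 * t := by
  classical
  set S : ℕ → Submodule F V := fun m => ⨆ i : Fin n, ⨆ _ : (i : ℕ) < m, π i with hS
  set Q : ℕ → Submodule F V := fun m =>
    ⨆ i : Fin n, ⨆ j : Fin n, ⨆ _ : i < j, ⨆ _ : (j : ℕ) < m, (π i ⊓ π j) with hQ
  -- step decomposition for S
  have hSstep : ∀ (m : ℕ) (hmn : m < n), S (m + 1) = S m ⊔ π ⟨m, hmn⟩ := by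
    intro m hmn
    apply le_antisymm
    · refine iSup_le fun i => iSup_le fun hi => ?_
      rcases Nat.lt_succ_iff_lt_or_eq.mp hi with h | h
      · exact le_sup_of_le_left (le_iSup_of_le i (le_iSup_of_le h le_rfl))
      · have : i = ⟨m, hmn⟩ := Fin.ext h
        exact this ▸ le_sup_right
    · refine sup_le ?_ ?_
      · exact iSup_mono fun i => iSup_le fun h =>
          le_iSup_of_le (Nat.lt_succ_of_lt h) le_rfl
      · exact le_iSup_of_le ⟨m, hmn⟩ (le_iSup_of_le (Nat.lt_succ_self m) le_rfl)
  -- step decomposition for Q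
  have hQstep : ∀ (m : ℕ) (hmn : m < n), Q (m + 1) = Q m ⊔
      (⨆ i : Fin n, ⨆ _ : (i : ℕ) < m, (π i ⊓ π ⟨m, hmn⟩)) := by
    intro m hmn
    apply le_antisymm
    · refine iSup_le fun i => iSup_le fun j => iSup_le fun hij => iSup_le fun hj => ?_
      rcases Nat.lt_succ_iff_lt_or_eq.mp hj with h | h
      · exact le_sup_of_le_left (le_iSup_of_le i (le_iSup_of_le j
          (le_iSup_of_le hij (le_iSup_of_le h le_rfl))))
      · have hje : j = ⟨m, hmn⟩ := Fin.ext h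
        have hi : (i : ℕ) < m := by
          have := hij
          rw [Fin.lt_def, h] at this
          exact this
        refine le_sup_of_le_right (le_iSup_of_le i (le_iSup_of_le hi ?_))
        rw [hje]
    · refine sup_le ?_ ?_
      · refine iSup_le fun i => iSup_le fun j => iSup_le fun hij => iSup_le fun hj => ?_
        exact le_iSup_of_le i (le_iSup_of_le j (le_iSup_of_le hij
          (le_iSup_of_le (Nat.lt_succ_of_lt hj) le_rfl)))
      · refine iSup_le fun i => iSup_le fun hi => ?_
        have hij : i < (⟨m, hmn⟩ : Fin n) := by
          rw [Fin.lt_def]; exact hi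
        exact le_iSup_of_le i (le_iSup_of_le ⟨m, hmn⟩ (le_iSup_of_le hij
          (le_iSup_of_le (Nat.lt_succ_self m) le_rfl)))
  -- key induction
  have key : ∀ m, 3 ≤ m → m ≤ n →
      finrank F (S m) + finrank F (Q m) ≤ (m - 1) * k + 2 * t := by
    intro m hm3
    induction m, hm3 using Nat.le_induction with
    | base =>
      intro h3n
      set i0 : Fin n := ⟨0, by omega⟩
      set i1 : Fin n := ⟨1, by omega⟩
      set i2 : Fin n := ⟨2, by omega⟩
      set J : Submodule F V := (π i0 ⊓ π i2) ⊔ (π i1 ⊓ π i2) with hJ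
      have hS3 : S 3 = (π i0 ⊔ π i1) ⊔ π i2 := by
        apply le_antisymm
        · refine iSup_le fun i => iSup_le fun hi => ?_
          have hi3 : (i : ℕ) < 3 := hi
          have : i = i0 ∨ i = i1 ∨ i = i2 := by
            have h0 : (i : ℕ) = 0 ∨ (i : ℕ) = 1 ∨ (i : ℕ) = 2 := by omega
            rcases h0 with h | h | h
            exacts [Or.inl (Fin.ext h), Or.inr (Or.inl (Fin.ext h)),
              Or.inr (Or.inr (Fin.ext h))]
          rcases this with rfl | rfl | rfl
          · exact le_sup_of_le_left le_sup_left
          · exact le_sup_of_le_left le_sup_right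
          · exact le_sup_right
        · refine sup_le (sup_le ?_ ?_) ?_
          · exact le_iSup_of_le i0 (le_iSup_of_le (by norm_num) le_rfl)
          · exact le_iSup_of_le i1 (le_iSup_of_le (by norm_num) le_rfl)
          · exact le_iSup_of_le i2 (le_iSup_of_le (by norm_num) le_rfl)
      have hQ3 : Q 3 = (π i0 ⊓ π i1) ⊔ J := by
        apply le_antisymm
        · refine iSup_le fun i => iSup_le fun j => iSup_le fun hij => iSup_le fun hj => ?_
          have hij' : (i : ℕ) < (j : ℕ) := hij
          have hj3 : (j : ℕ) < 3 := hj
          have : (i = i0 ∧ j = i1) ∨ (i = i0 ∧ j = i2) ∨ (i = i1 ∧ j = i2) := by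
            have h0 : ((i : ℕ) = 0 ∧ (j : ℕ) = 1) ∨ ((i : ℕ) = 0 ∧ (j : ℕ) = 2) ∨
                ((i : ℕ) = 1 ∧ (j : ℕ) = 2) := by omega
            rcases h0 with ⟨h1, h2⟩ | ⟨h1, h2⟩ | ⟨h1, h2⟩
            exacts [Or.inl ⟨Fin.ext h1, Fin.ext h2⟩, Or.inr (Or.inl ⟨Fin.ext h1, Fin.ext h2⟩),
              Or.inr (Or.inr ⟨Fin.ext h1, Fin.ext h2⟩)]
          rcases this with ⟨rfl, rfl⟩ | ⟨rfl, rfl⟩ | ⟨rfl, rfl⟩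
          · exact le_sup_left
          · exact le_sup_of_le_right le_sup_left
          · exact le_sup_of_le_right le_sup_right
        · have h01 : (i0 : ℕ) < (i1 : ℕ) := by norm_num
          have h02 : (i0 : ℕ) < (i2 : ℕ) := by norm_num
          have h12 : (i1 : ℕ) < (i2 : ℕ) := by norm_num
          refine sup_le ?_ (sup_le ?_ ?_)
          · exact le_iSup_of_le i0 (le_iSup_of_le i1 (le_iSup_of_le h01
              (le_iSup_of_le (by norm_num) le_rfl)))
          · exact le_iSup_of_le i0 (le_iSup_of_le i2 (le_iSup_of_le h02
              (le_iSup_of_le (by norm_num) le_rfl)))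
          · exact le_iSup_of_le i1 (le_iSup_of_le i2 (le_iSup_of_le h12
              (le_iSup_of_le (by norm_num) le_rfl)))
      have hne01 : i0 ≠ i1 := Fin.ne_of_val_ne (by norm_num)
      have hne02 : i0 ≠ i2 := Fin.ne_of_val_ne (by norm_num)
      have hne12 : i1 ≠ i2 := Fin.ne_of_val_ne (by norm_num)
      have d01 := hint i0 i1 hne01
      have d02 := hint i0 i2 hne02
      have d12 := hint i1 i2 hne12
      have e1 := Submodule.finrank_sup_add_finrank_inf_eq (π i0) (π i1)
      have e2 := Submodule.finrank_sup_add_finrank_inf_eq (π i0 ⊔ π i1) (π i2)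
      have e3 := Submodule.finrank_sup_add_finrank_inf_eq (π i0 ⊓ π i1) J
      have e4 := Submodule.finrank_sup_add_finrank_inf_eq (π i0 ⊓ π i1) (π i0 ⊓ π i2)
      have hJle : J ≤ (π i0 ⊔ π i1) ⊓ π i2 := by
        refine sup_le (le_inf (inf_le_left.trans le_sup_left) inf_le_right)
          (le_inf (inf_le_left.trans le_sup_right) inf_le_right)
      have mJ := Submodule.finrank_mono hJle
      have hw : (π i0 ⊓ π i1) ⊔ (π i0 ⊓ π i2) ≤ π i0 := sup_le inf_le_left inf_le_left
      have mw := Submodule.finrank_mono hw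
      have hz : (π i0 ⊓ π i1) ⊓ (π i0 ⊓ π i2) ≤ (π i0 ⊓ π i1) ⊓ J :=
        inf_le_inf_left _ (le_sup_left)
      have mz := Submodule.finrank_mono hz
      rw [hS3, hQ3]
      have hd0 := hdim i0
      have hd1 := hdim i1
      have hd2 := hdim i2
      omega
    | succ m hm3 ih =>
      intro hmn
      have hmn' : m < n := by omega
      have ih' := ih (by omega)
      set p : Fin n := ⟨m, hmn'⟩
      set R : Submodule F V := ⨆ i : Fin n, ⨆ _ : (i : ℕ) < m, (π i ⊓ π p) with hR
      have hRle : R ≤ S m ⊓ π p := by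
        refine iSup_le fun i => iSup_le fun hi => le_inf ?_ inf_le_right
        exact inf_le_left.trans (le_iSup_of_le i (le_iSup_of_le hi le_rfl))
      have eS := Submodule.finrank_sup_add_finrank_inf_eq (S m) (π p)
      have eQ := Submodule.finrank_sup_add_finrank_inf_eq (Q m) R
      have mR := Submodule.finrank_mono hRle
      have hdp := hdim p
      rw [hSstep m hmn', hQstep m hmn']
      show finrank F ↥(S m ⊔ π p) + finrank F ↥(Q m ⊔ R) ≤ (m + 1 - 1) * k + 2 * t
      have hmk : (m + 1 - 1) * k = (m - 1) * k + k := by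
        have h : m + 1 - 1 = m - 1 + 1 := by omega
        rw [h, Nat.succ_mul]
      omega
  -- conclude
  have hSn : (⨆ i, π i) = S n := by
    refine iSup_congr fun i => ?_
    rw [iSup_pos i.isLt]
  have hQn : (⨆ i, ⨆ j, ⨆ (_ : i < j), π i ⊓ π j) = Q n := by
    refine iSup_congr fun i => iSup_congr fun j => iSup_congr fun _ => ?_
    rw [iSup_pos j.isLt]
  rw [hSn, hQn]
  exact key n hn le_rfl
end

section
/- Let {π₁,...,πₙ} (n ≥ 3) be a (k,k-t)-SCID with k ≥ 2t. With S the span of all πᵢ and I the span of all pairwise intersections, dim S + dim I ≤ 2k + 2(n-2)t - (n-3). -/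
set_option maxHeartbeats 1000000

open Module

namespace SCIDAux

variable {F V : Type*} [Field F] [AddCommGroup V] [Module F V]
    [FiniteDimensional F V] {n k t : ℕ}

private lemma frmono {s u : Submodule F V} (h : s ≤ u) :
    finrank F s ≤ finrank F u :=
  Submodule.finrank_mono h

private lemma rank_formula (s u : Submodule F V) :
    finrank F ↥(s ⊔ u) + finrank F ↥(s ⊓ u) = finrank F s + finrank F u :=
  Submodule.finrank_sup_add_finrank_inf_eq s u

omit [FiniteDimensional F V] in
private lemma inf_triple (a b c : Submodule F V) :
    (a ⊓ b) ⊓ (a ⊓ c) = a ⊓ b ⊓ c :=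
  le_antisymm (le_inf inf_le_left (inf_le_right.trans inf_le_right))
    (le_inf inf_le_left (le_inf (inf_le_left.trans inf_le_left) inf_le_right))

omit [FiniteDimensional F V] in
private lemma le_offDiag_sup (π : Fin n → Submodule F V) {A : Finset (Fin n)} {i j : Fin n}
    (hi : i ∈ A) (hj : j ∈ A) (hne : i ≠ j) :
    π i ⊓ π j ≤ A.offDiag.sup (fun p => π p.1 ⊓ π p.2) :=
  Finset.le_sup (f := fun p : Fin n × Fin n => π p.1 ⊓ π p.2) (b := (i, j))
    (Finset.mem_offDiag.mpr ⟨hi, hj, hne⟩)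

omit [FiniteDimensional F V] in
private lemma offDiag_sup_insert (π : Fin n → Submodule F V) {A : Finset (Fin n)} {x : Fin n}
    (hx : x ∉ A) :
    (insert x A).offDiag.sup (fun p => π p.1 ⊓ π p.2) =
      A.offDiag.sup (fun p => π p.1 ⊓ π p.2) ⊔ A.sup (fun i => π i ⊓ π x) := by
  apply le_antisymm
  · refine Finset.sup_le ?_
    rintro ⟨i, j⟩ hij
    rw [Finset.mem_offDiag] at hij
    obtain ⟨hi, hj, hne⟩ := hij
    simp only [Finset.mem_insert] at hi hj
    have hne' : i ≠ j := hne
    rcases hi with rfl | hi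
    · rcases hj with rfl | hj
      · exact absurd rfl hne'
      · exact le_sup_of_le_right (le_trans (inf_comm (π i) (π j)).le
          (Finset.le_sup (f := fun a => π a ⊓ π i) hj))
    · rcases hj with rfl | hj
      · exact le_sup_of_le_right (Finset.le_sup (f := fun a => π a ⊓ π j) hi)
      · exact le_sup_of_le_left (le_offDiag_sup π hi hj hne')
  · refine sup_le ?_ ?_
    · refine Finset.sup_le fun p hp => ?_
      rw [Finset.mem_offDiag] at hp
      exact le_offDiag_sup π (Finset.mem_insert_of_mem hp.1)
        (Finset.mem_insert_of_mem hp.2.1) hp.2.2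
    · refine Finset.sup_le fun i hi => ?_
      have hix : i ≠ x := fun h => hx (h ▸ hi)
      exact le_offDiag_sup π (Finset.mem_insert_of_mem hi) (Finset.mem_insert_self x A) hix

private lemma span_bound (π : Fin n → Submodule F V)
    (hdim : ∀ i, finrank F ↥(π i) = k)
    (hint : ∀ i j, i ≠ j → finrank F ↥(π i ⊓ π j) = k - t)
    (ht : t ≤ k) :
    ∀ A : Finset (Fin n), A.Nonempty → finrank F ↥(A.sup π) + t ≤ k + A.card * t := by
  intro A
  induction A using Finset.induction_on with
  | empty => rintro ⟨a, ha⟩; simp at ha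
  | @insert x A hxA ih =>
    intro _
    rcases A.eq_empty_or_nonempty with rfl | hA
    · rw [Finset.sup_insert, Finset.sup_empty, sup_bot_eq,
        Finset.card_insert_of_notMem (by simp), Finset.card_empty, hdim x]
      omega
    · obtain ⟨a, ha⟩ := hA
      have hxa : x ≠ a := fun h => hxA (h ▸ ha)
      have h1 := rank_formula (π x) (A.sup π)
      have h2 : finrank F ↥(π x ⊓ π a) ≤ finrank F ↥(π x ⊓ A.sup π) :=
        frmono (inf_le_inf_left _ (Finset.le_sup ha))
      rw [hint x a hxa] at h2
      have h3 := ih ⟨a, ha⟩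
      rw [Finset.sup_insert, Finset.card_insert_of_notMem hxA]
      have h4 : (A.card + 1) * t = A.card * t + t := by ring
      have h5 := hdim x
      omega

private lemma base_bound (π : Fin n → Submodule F V)
    (hdim : ∀ i, finrank F ↥(π i) = k)
    (hint : ∀ i j, i ≠ j → finrank F ↥(π i ⊓ π j) = k - t)
    (ht : t ≤ k) (hkt : 2 * t ≤ k)
    {i₀ j₀ l₀ : Fin n} (hij : i₀ ≠ j₀) (hil : i₀ ≠ l₀) (hjl : j₀ ≠ l₀) :
    finrank F ↥((insert i₀ (insert j₀ ({l₀} : Finset (Fin n)))).sup π) +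
      finrank F ↥((insert i₀ (insert j₀ ({l₀} : Finset (Fin n)))).offDiag.sup
        (fun p => π p.1 ⊓ π p.2)) ≤ 2 * k + 2 * t := by
  have hS : (insert i₀ (insert j₀ ({l₀} : Finset (Fin n)))).sup π
      = (π i₀ ⊔ π j₀) ⊔ π l₀ := by
    rw [Finset.sup_insert, Finset.sup_insert, Finset.sup_singleton, sup_assoc]
  have hIle : (insert i₀ (insert j₀ ({l₀} : Finset (Fin n)))).offDiag.sup
      (fun p => π p.1 ⊓ π p.2) ≤
      (π i₀ ⊓ π j₀) ⊔ ((π i₀ ⊓ π l₀) ⊔ (π j₀ ⊓ π l₀)) := by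
    refine Finset.sup_le ?_
    rintro ⟨p, q⟩ hpq
    rw [Finset.mem_offDiag] at hpq
    obtain ⟨hp, hq, hne⟩ := hpq
    have hne' : p ≠ q := hne
    simp only [Finset.mem_insert, Finset.mem_singleton] at hp hq
    show π p ⊓ π q ≤ (π i₀ ⊓ π j₀) ⊔ ((π i₀ ⊓ π l₀) ⊔ (π j₀ ⊓ π l₀))
    rcases hp with rfl | rfl | rfl <;> rcases hq with rfl | rfl | rfl
    · exact absurd rfl hne'
    · exact le_sup_left
    · exact le_sup_of_le_right le_sup_left
    · rw [inf_comm]; exact le_sup_left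
    · exact absurd rfl hne'
    · exact le_sup_of_le_right le_sup_right
    · rw [inf_comm]; exact le_sup_of_le_right le_sup_left
    · rw [inf_comm]; exact le_sup_of_le_right le_sup_right
    · exact absurd rfl hne'
  rw [hS]
  have hIle' := frmono hIle
  have f12 := rank_formula (π i₀) (π j₀)
  rw [hdim i₀, hdim j₀, hint i₀ j₀ hij] at f12
  have f3 := rank_formula (π i₀ ⊔ π j₀) (π l₀)
  rw [hdim l₀] at f3
  have hG : (π i₀ ⊓ π l₀) ⊔ (π j₀ ⊓ π l₀) ≤ (π i₀ ⊔ π j₀) ⊓ π l₀ :=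
    sup_le (le_inf (le_trans inf_le_left le_sup_left) inf_le_right)
      (le_inf (le_trans inf_le_left le_sup_right) inf_le_right)
  have hGle := frmono hG
  have fDG := rank_formula (π i₀ ⊓ π j₀) ((π i₀ ⊓ π l₀) ⊔ (π j₀ ⊓ π l₀))
  rw [hint i₀ j₀ hij] at fDG
  have fG := rank_formula (π i₀ ⊓ π l₀) (π j₀ ⊓ π l₀)
  rw [hint i₀ l₀ hil, hint j₀ l₀ hjl] at fG
  have fP2 := rank_formula (π i₀ ⊓ π j₀) (π i₀ ⊓ π l₀)
  rw [inf_triple, hint i₀ j₀ hij, hint i₀ l₀ hil] at fP2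
  have hPk : finrank F ↥((π i₀ ⊓ π j₀) ⊔ (π i₀ ⊓ π l₀)) ≤ k := by
    rw [← hdim i₀]
    exact frmono (sup_le inf_le_left inf_le_left)
  have hE1 : π i₀ ⊓ π j₀ ⊓ π l₀ ≤
      (π i₀ ⊓ π j₀) ⊓ ((π i₀ ⊓ π l₀) ⊔ (π j₀ ⊓ π l₀)) :=
    le_inf inf_le_left
      (le_sup_of_le_left (le_inf (le_trans inf_le_left inf_le_left) inf_le_right))
  have hE1r := frmono hE1
  omega

private lemma step_bound (π : Fin n → Submodule F V)
    (hdim : ∀ i, finrank F ↥(π i) = k)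
    (hint : ∀ i j, i ≠ j → finrank F ↥(π i ⊓ π j) = k - t)
    (ht : t ≤ k) (hkt : 2 * t ≤ k)
    {i₀ j₀ l₀ : Fin n} (hij : i₀ ≠ j₀) (hil : i₀ ≠ l₀) (hjl : j₀ ≠ l₀)
    (hE : finrank F ↥(π i₀ ⊓ π j₀ ⊓ π l₀) + t + 1 ≤ k)
    {A : Finset (Fin n)} (hi : i₀ ∈ A) (hj : j₀ ∈ A) (hl : l₀ ∈ A)
    {x : Fin n} (hx : x ∉ A) :
    finrank F ↥((insert x A).sup π) +
      finrank F ↥((insert x A).offDiag.sup (fun p => π p.1 ⊓ π p.2)) + 1 ≤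
    finrank F ↥(A.sup π) +
      finrank F ↥(A.offDiag.sup (fun p => π p.1 ⊓ π p.2)) + 2 * t := by
  have hxi : i₀ ≠ x := fun h => hx (h ▸ hi)
  rw [Finset.sup_insert, offDiag_sup_insert π hx]
  have h1 := rank_formula (π x) (A.sup π)
  rw [hdim x] at h1
  have h2 := rank_formula (A.offDiag.sup (fun p => π p.1 ⊓ π p.2))
    (A.sup (fun i => π i ⊓ π x))
  have h3 : finrank F ↥(A.sup (fun i => π i ⊓ π x)) ≤ finrank F ↥(π x ⊓ A.sup π) := by
    refine frmono (Finset.sup_le fun i hi' =>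
      le_inf inf_le_right (le_trans inf_le_left (Finset.le_sup hi')))
  have hPI : (π i₀ ⊓ π j₀) ⊔ (π i₀ ⊓ π l₀) ≤ A.offDiag.sup (fun p => π p.1 ⊓ π p.2) :=
    sup_le (le_offDiag_sup π hi hj hij) (le_offDiag_sup π hi hl hil)
  have hBJ : π i₀ ⊓ π x ≤ A.sup (fun i => π i ⊓ π x) :=
    Finset.le_sup (f := fun i => π i ⊓ π x) hi
  have e4 : finrank F ↥(((π i₀ ⊓ π j₀) ⊔ (π i₀ ⊓ π l₀)) ⊓ (π i₀ ⊓ π x)) ≤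
      finrank F ↥(A.offDiag.sup (fun p => π p.1 ⊓ π p.2) ⊓ A.sup (fun i => π i ⊓ π x)) :=
    frmono (inf_le_inf hPI hBJ)
  have e1 := rank_formula ((π i₀ ⊓ π j₀) ⊔ (π i₀ ⊓ π l₀)) (π i₀ ⊓ π x)
  rw [hint i₀ x hxi] at e1
  have e2 := rank_formula (π i₀ ⊓ π j₀) (π i₀ ⊓ π l₀)
  rw [inf_triple, hint i₀ j₀ hij, hint i₀ l₀ hil] at e2
  have e3 : finrank F ↥(((π i₀ ⊓ π j₀) ⊔ (π i₀ ⊓ π l₀)) ⊔ (π i₀ ⊓ π x)) ≤ k := by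
    rw [← hdim i₀]
    exact frmono (sup_le (sup_le inf_le_left inf_le_left) inf_le_left)
  omega

private lemma main_ind (π : Fin n → Submodule F V)
    (hdim : ∀ i, finrank F ↥(π i) = k)
    (hint : ∀ i j, i ≠ j → finrank F ↥(π i ⊓ π j) = k - t)
    (ht : t ≤ k) (hkt : 2 * t ≤ k)
    {i₀ j₀ l₀ : Fin n} (hij : i₀ ≠ j₀) (hil : i₀ ≠ l₀) (hjl : j₀ ≠ l₀)
    (hE : finrank F ↥(π i₀ ⊓ π j₀ ⊓ π l₀) + t + 1 ≤ k) :
    ∀ m (A : Finset (Fin n)), A.card = m + 3 → i₀ ∈ A → j₀ ∈ A → l₀ ∈ A →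
      finrank F ↥(A.sup π) +
        finrank F ↥(A.offDiag.sup fun p => π p.1 ⊓ π p.2) + m ≤
      2 * k + 2 * t + 2 * m * t := by
  intro m
  induction m with
  | zero =>
    intro A hcard hi hj hl
    have hT : insert i₀ (insert j₀ ({l₀} : Finset (Fin n))) ⊆ A := by
      intro y hy
      simp only [Finset.mem_insert, Finset.mem_singleton] at hy
      rcases hy with rfl | rfl | rfl <;> assumption
    have hcT : (insert i₀ (insert j₀ ({l₀} : Finset (Fin n)))).card = 3 := by
      rw [Finset.card_insert_of_notMem (by simp [hij, hil]),
        Finset.card_insert_of_notMem (by simp [hjl]), Finset.card_singleton]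
    have hAeq : insert i₀ (insert j₀ ({l₀} : Finset (Fin n))) = A :=
      Finset.eq_of_subset_of_card_le hT (by omega)
    rw [← hAeq]
    have := base_bound π hdim hint ht hkt hij hil hjl
    omega
  | succ m ih =>
    intro A hcard hi hj hl
    have hT : insert i₀ (insert j₀ ({l₀} : Finset (Fin n))) ⊆ A := by
      intro y hy
      simp only [Finset.mem_insert, Finset.mem_singleton] at hy
      rcases hy with rfl | rfl | rfl <;> assumption
    have hcT : (insert i₀ (insert j₀ ({l₀} : Finset (Fin n)))).card = 3 := by
      rw [Finset.card_insert_of_notMem (by simp [hij, hil]),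
        Finset.card_insert_of_notMem (by simp [hjl]), Finset.card_singleton]
    have hsd : (A \ insert i₀ (insert j₀ ({l₀} : Finset (Fin n)))).Nonempty := by
      rw [← Finset.card_pos, Finset.card_sdiff_of_subset hT]
      omega
    obtain ⟨x, hxmem⟩ := hsd
    rw [Finset.mem_sdiff] at hxmem
    obtain ⟨hxA, hxT⟩ := hxmem
    simp only [Finset.mem_insert, Finset.mem_singleton] at hxT
    push_neg at hxT
    obtain ⟨hx1, hx2, hx3⟩ := hxT
    have hxe : x ∉ A.erase x := Finset.notMem_erase x A
    have hins : insert x (A.erase x) = A := Finset.insert_erase hxA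
    have hce : (A.erase x).card = m + 3 := by
      rw [Finset.card_erase_of_mem hxA]
      omega
    have hie : i₀ ∈ A.erase x := Finset.mem_erase.mpr ⟨Ne.symm hx1, hi⟩
    have hje : j₀ ∈ A.erase x := Finset.mem_erase.mpr ⟨Ne.symm hx2, hj⟩
    have hle : l₀ ∈ A.erase x := Finset.mem_erase.mpr ⟨Ne.symm hx3, hl⟩
    have key := step_bound π hdim hint ht hkt hij hil hjl hE hie hje hle hxe
    rw [hins] at key
    have ihh := ih (A.erase x) hce hie hje hle
    have harith : 2 * (m + 1) * t = 2 * m * t + 2 * t := by ring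
    omega

end SCIDAux

theorem scid_bound_k_ge_two_t (F V : Type*) [Field F] [Fintype F]
    [AddCommGroup V] [Module F V] [FiniteDimensional F V]
    (n k t : ℕ) (hn : 3 ≤ n) (ht : t ≤ k) (hkt : 2 * t ≤ k)
    (π : Fin n → Submodule F V) (hinj : Function.Injective π)
    (hdim : ∀ i, finrank F ↥(π i) = k)
    (hint : ∀ i j, i ≠ j → finrank F ↥(π i ⊓ π j) = k - t) :
    finrank F ↥(⨆ i, π i) +
        finrank F ↥(⨆ i, ⨆ j, ⨆ (_ : i < j), π i ⊓ π j) + (n - 3) ≤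
      2 * k + 2 * (n - 2) * t := by
  obtain ⟨i0, hi0⟩ : ∃ i : Fin n, (i : ℕ) = 0 := ⟨⟨0, by omega⟩, rfl⟩
  obtain ⟨i1, hi1⟩ : ∃ i : Fin n, (i : ℕ) = 1 := ⟨⟨1, by omega⟩, rfl⟩
  have hne01 : i0 ≠ i1 := by
    intro h
    rw [h, hi1] at hi0
    omega
  have hlt01 : i0 < i1 := by
    rw [Fin.lt_def, hi0, hi1]
    omega
  have ht1 : 1 ≤ t := by
    by_contra h
    have ht0 : t = 0 := by omega
    have h1 : π i0 ⊓ π i1 = π i0 :=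
      Submodule.eq_of_le_of_finrank_le inf_le_left
        (by rw [hdim i0, hint i0 i1 hne01]; omega)
    have h2 : π i0 ⊓ π i1 = π i1 :=
      Submodule.eq_of_le_of_finrank_le inf_le_right
        (by rw [hdim i1, hint i0 i1 hne01]; omega)
    exact hne01 (hinj (h1.symm.trans h2))
  have hSrw : (⨆ i, π i) = (Finset.univ : Finset (Fin n)).sup π :=
    le_antisymm (iSup_le fun i => Finset.le_sup (Finset.mem_univ i))
      (Finset.sup_le fun i _ => le_iSup π i)
  by_cases hEx : ∃ p q r : Fin n, p ≠ q ∧ p ≠ r ∧ q ≠ r ∧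
      finrank F ↥(π p ⊓ π q ⊓ π r) + t + 1 ≤ k
  · obtain ⟨p, q, r, hpq, hpr, hqr, hE⟩ := hEx
    have hIrw : (⨆ i, ⨆ j, ⨆ (_ : i < j), π i ⊓ π j) =
        (Finset.univ : Finset (Fin n)).offDiag.sup (fun p => π p.1 ⊓ π p.2) := by
      apply le_antisymm
      · exact iSup_le fun i => iSup_le fun j => iSup_le fun hij =>
          SCIDAux.le_offDiag_sup π (Finset.mem_univ _) (Finset.mem_univ _) (ne_of_lt hij)
      · refine Finset.sup_le ?_
        rintro ⟨a, b⟩ hab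
        rw [Finset.mem_offDiag] at hab
        have hab' : a ≠ b := hab.2.2
        show π a ⊓ π b ≤ _
        rcases lt_or_gt_of_ne hab' with h | h
        · exact le_iSup_of_le a (le_iSup_of_le b (le_iSup_of_le h le_rfl))
        · rw [inf_comm]
          exact le_iSup_of_le b (le_iSup_of_le a (le_iSup_of_le h le_rfl))
    obtain ⟨m, hm⟩ : ∃ m, n = m + 3 := ⟨n - 3, by omega⟩
    have hcard : (Finset.univ : Finset (Fin n)).card = m + 3 := by
      rw [Finset.card_univ, Fintype.card_fin]
      omega
    have key := SCIDAux.main_ind π hdim hint ht hkt hpq hpr hqr hE m Finset.univ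
      hcard (Finset.mem_univ _) (Finset.mem_univ _) (Finset.mem_univ _)
    rw [hSrw, hIrw, show n - 3 = m by omega,
      show 2 * (n - 2) * t = 2 * m * t + 2 * t by rw [show n - 2 = m + 1 by omega]; ring]
    omega
  · push_neg at hEx
    have hge : ∀ p q r : Fin n, p ≠ q → p ≠ r → q ≠ r → π p ⊓ π q ≤ π r := by
      intro p q r h1 h2 h3
      have h4 := hEx p q r h1 h2 h3
      have h5 : π p ⊓ π q ⊓ π r = π p ⊓ π q :=
        Submodule.eq_of_le_of_finrank_le inf_le_left
          (by rw [hint p q h1]; omega)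
      calc π p ⊓ π q = π p ⊓ π q ⊓ π r := h5.symm
        _ ≤ π r := inf_le_right
    have hsub : ∀ p q r : Fin n, p ≠ q → π p ⊓ π q ≤ π r := by
      intro p q r h1
      by_cases h2 : r = p
      · subst h2; exact inf_le_left
      by_cases h3 : r = q
      · subst h3; exact inf_le_right
      exact hge p q r h1 (Ne.symm h2) (Ne.symm h3)
    have hall : ∀ p q : Fin n, p ≠ q → π p ⊓ π q = π i0 ⊓ π i1 := by
      intro p q h1
      exact le_antisymm (le_inf (hsub p q i0 h1) (hsub p q i1 h1))
        (le_inf (hsub i0 i1 p hne01) (hsub i0 i1 q hne01))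
    have hIrw : (⨆ i, ⨆ j, ⨆ (_ : i < j), π i ⊓ π j) = π i0 ⊓ π i1 := by
      apply le_antisymm
      · exact iSup_le fun i => iSup_le fun j => iSup_le fun hij =>
          (hall i j (ne_of_lt hij)).le
      · exact le_iSup_of_le i0 (le_iSup_of_le i1 (le_iSup_of_le hlt01 le_rfl))
    have hspan := SCIDAux.span_bound π hdim hint ht Finset.univ ⟨i0, Finset.mem_univ _⟩
    rw [Finset.card_univ, Fintype.card_fin] at hspan
    rw [hSrw, hIrw, hint i0 i1 hne01]
    obtain ⟨m, hm⟩ : ∃ m, n = m + 3 := ⟨n - 3, by omega⟩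
    rw [show n - 3 = m by omega,
      show 2 * (n - 2) * t = 2 * (m * t) + 2 * t by rw [show n - 2 = m + 1 by omega]; ring]
    have e1 : n * t = m * t + 3 * t := by rw [hm]; ring
    have e2 : m ≤ m * t := by
      calc m = m * 1 := (mul_one m).symm
        _ ≤ m * t := Nat.mul_le_mul_left m ht1
    omega
end

section
/- Suppose (n-1)(k-t) ≤ k and there exist subspaces V_{ij} (1≤i<j≤n) of dimension k-t and U_i (1≤i≤n) of dimension k-(n-1)(k-t) such that the sum of all these subspaces is direct (its dimension equals n(k-(n-1)(k-t)) + n(n-1)(k-t)/2). Define πᵢ := ⟨Uᵢ, V_{ij} for j ≠ i⟩ (where V_{ji} := V_{ij} for j < i). Then {π₁,...,πₙ} is a (k,k-t)-SCID with πᵢ ∩ πⱼ = V_{ij}, and dim S + dim I = nk, where S is the span of all πᵢ and I the span of all pairwise intersections. -/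
open Module Finset

section scidAux

variable {F V : Type*} [Field F] [AddCommGroup V] [Module F V] [FiniteDimensional F V]

private lemma scid_finrank_biSup_le {ι : Type*} [DecidableEq ι] (W : ι → Submodule F V)
    (A : Finset ι) :
    finrank F ↥(⨆ i ∈ A, W i) ≤ ∑ i ∈ A, finrank F ↥(W i) := by
  classical
  induction A using Finset.induction with
  | empty => simp
  | @insert a s h ih =>
      rw [Finset.sum_insert h, Finset.iSup_insert]
      refine le_trans ?_ (Nat.add_le_add le_rfl ih)
      have := Submodule.finrank_sup_add_finrank_inf_eq (W a) (⨆ i ∈ s, W i)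
      omega

variable {ι : Type*} [DecidableEq ι] [Fintype ι]

private lemma scid_key_rank_compl (W : ι → Submodule F V)
    (h : finrank F ↥(⨆ i, W i) = ∑ i, finrank F ↥(W i)) (A : Finset ι) :
    finrank F ↥(⨆ i ∈ A, W i) = ∑ i ∈ A, finrank F ↥(W i) ∧
      (⨆ i ∈ A, W i) ⊓ (⨆ i ∈ Aᶜ, W i) = ⊥ := by
  have hsup : (⨆ i ∈ A, W i) ⊔ (⨆ i ∈ Aᶜ, W i) = ⨆ i, W i := by
    rw [← Finset.iSup_union, Finset.union_compl]
    simp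
  have h1 := scid_finrank_biSup_le W A
  have h2 := scid_finrank_biSup_le W Aᶜ
  have h3 := Submodule.finrank_sup_add_finrank_inf_eq (⨆ i ∈ A, W i) (⨆ i ∈ Aᶜ, W i)
  rw [hsup] at h3
  have h4 : ∑ i ∈ A, finrank F ↥(W i) + ∑ i ∈ Aᶜ, finrank F ↥(W i) = ∑ i, finrank F ↥(W i) :=
    Finset.sum_add_sum_compl A _
  have h5 : finrank F ↥((⨆ i ∈ A, W i) ⊓ (⨆ i ∈ Aᶜ, W i)) = 0 := by omega
  exact ⟨by omega, Submodule.finrank_eq_zero.1 h5⟩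

private lemma scid_key_disj (W : ι → Submodule F V)
    (h : finrank F ↥(⨆ i, W i) = ∑ i, finrank F ↥(W i)) {A B : Finset ι}
    (hAB : Disjoint A B) : (⨆ i ∈ A, W i) ⊓ (⨆ i ∈ B, W i) = ⊥ := by
  have hB : (⨆ i ∈ B, W i) ≤ ⨆ i ∈ Aᶜ, W i := by
    refine iSup₂_le fun i hi => le_iSup₂ (f := fun i _ => W i) i ?_
    simpa using Finset.disjoint_left.1 hAB.symm hi
  exact le_bot_iff.1 (le_trans (inf_le_inf_left _ hB)
    (scid_key_rank_compl W h A).2.le)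

private lemma scid_key_inf (W : ι → Submodule F V)
    (h : finrank F ↥(⨆ i, W i) = ∑ i, finrank F ↥(W i)) (A B : Finset ι) :
    (⨆ i ∈ A, W i) ⊓ (⨆ i ∈ B, W i) = ⨆ i ∈ A ∩ B, W i := by
  have hA : (A ∩ B) ∪ (A \ B) = A := by
    ext x; simp [Finset.mem_inter, Finset.mem_sdiff]; tauto
  have hx : (⨆ i ∈ A ∩ B, W i) ≤ ⨆ i ∈ B, W i :=
    iSup₂_le fun i hi => le_iSup₂ (f := fun i _ => W i) i (Finset.mem_inter.1 hi).2
  calc (⨆ i ∈ A, W i) ⊓ (⨆ i ∈ B, W i)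
      = ((⨆ i ∈ A ∩ B, W i) ⊔ (⨆ i ∈ A \ B, W i)) ⊓ (⨆ i ∈ B, W i) := by
        rw [← Finset.iSup_union, hA]
    _ = (⨆ i ∈ A ∩ B, W i) ⊔ ((⨆ i ∈ A \ B, W i) ⊓ (⨆ i ∈ B, W i)) :=
        sup_inf_assoc_of_le _ hx
    _ = ⨆ i ∈ A ∩ B, W i := by
        rw [scid_key_disj W h (Finset.sdiff_disjoint), sup_bot_eq]

end scidAux

section scidFamily

variable {F V : Type*} [Field F] [AddCommGroup V] [Module F V] [FiniteDimensional F V]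
variable {n : ℕ}

/-- the combined family of subspaces -/
private def sW (U : Fin n → Submodule F V) (Vij : Fin n → Fin n → Submodule F V) :
    Fin n ⊕ Fin n × Fin n → Submodule F V :=
  Sum.elim U fun p => if p.1 < p.2 then Vij p.1 p.2 else ⊥

/-- the pair part index set -/
private def sP (n : ℕ) : Finset (Fin n × Fin n) :=
  Finset.univ.filter fun p => p.1 < p.2

/-- indices used by π i -/
private def sA (n : ℕ) (i : Fin n) : Finset (Fin n ⊕ Fin n × Fin n) :=
  {Sum.inl i} ∪ ((sP n).filter fun p => p.1 = i ∨ p.2 = i).image Sum.inr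

private lemma sW_total (U : Fin n → Submodule F V) (Vij : Fin n → Fin n → Submodule F V) :
    (⨆ x, sW U Vij x) = (⨆ i, U i) ⊔ ⨆ i, ⨆ j, ⨆ _ : i < j, Vij i j := by
  rw [iSup_sum, iSup_prod]
  simp [sW, iSup_eq_if]

private lemma sA_biSup (U : Fin n → Submodule F V) (Vij : Fin n → Fin n → Submodule F V)
    (hsymm : ∀ i j, Vij i j = Vij j i) (i : Fin n) :
    (⨆ x ∈ sA n i, sW U Vij x) = U i ⊔ ⨆ j, ⨆ _ : j ≠ i, Vij i j := by
  apply le_antisymm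
  · refine iSup₂_le fun x hx => ?_
    simp only [sA, sP, Finset.mem_union, Finset.mem_singleton, Finset.mem_image,
      Finset.mem_filter, Finset.mem_univ, true_and] at hx
    rcases hx with rfl | ⟨p, ⟨hlt, hp⟩, rfl⟩
    · exact le_sup_of_le_left (by simp [sW])
    · have hw : sW U Vij (Sum.inr p) = Vij p.1 p.2 := by simp [sW, hlt]
      rw [hw]
      rcases hp with h1 | h2
      · refine le_sup_of_le_right ?_
        rw [h1] at hlt ⊢
        exact le_iSup₂_of_le p.2 (ne_of_gt hlt) le_rfl
      · refine le_sup_of_le_right ?_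
        rw [h2] at hlt ⊢
        rw [hsymm p.1 i]
        exact le_iSup₂_of_le p.1 (ne_of_lt hlt) le_rfl
  · refine sup_le ?_ (iSup₂_le fun j hj => ?_)
    · refine le_iSup₂_of_le (Sum.inl i) ?_ le_rfl
      simp [sA]
    · rcases hj.lt_or_gt with h | h
      · refine le_iSup₂_of_le (Sum.inr (j, i)) ?_ ?_
        · simp [sA, sP, h]
        · simp [sW, h, hsymm i j]
      · refine le_iSup₂_of_le (Sum.inr (i, j)) ?_ ?_
        · simp [sA, sP, h]
        · simp [sW, h]

private lemma sA_inter {i j : Fin n} (hij : i < j) :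
    sA n i ∩ sA n j = {Sum.inr (i, j)} := by
  ext x
  cases x with
  | inl a =>
      simp only [sA, sP, Finset.mem_inter, Finset.mem_union, Finset.mem_singleton,
        Finset.mem_image, Finset.mem_filter, Finset.mem_univ, true_and]
      constructor
      · rintro ⟨h1 | ⟨p, _, hp⟩, h2 | ⟨q, _, hq⟩⟩ <;> first
          | (exfalso; simp_all)
          | (exfalso; injection h1 with h1'; injection h2 with h2'
             exact absurd (h1'.symm.trans h2') (ne_of_lt hij))
      · intro h; exact absurd h (by simp)
  | inr p =>
      simp only [sA, sP, Finset.mem_inter, Finset.mem_union, Finset.mem_singleton,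
        Finset.mem_image, Finset.mem_filter, Finset.mem_univ, true_and,
        Sum.inr.injEq]
      constructor
      · rintro ⟨h1 | ⟨q, ⟨hq1, hq2⟩, hq⟩, h2 | ⟨r, ⟨hr1, hr2⟩, hr⟩⟩
        · exact absurd h1 (by simp)
        · exact absurd h1 (by simp)
        · exact absurd h2 (by simp)
        · subst hq; subst hr
          rcases hq2 with h1 | h1 <;> rcases hr2 with h2 | h2
          · exact absurd (h1.symm.trans h2) (ne_of_lt hij)
          · exact Prod.ext h1 h2
          · exact absurd (show j < i by rw [← h2, ← h1]; exact hq1) (lt_asymm hij)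
          · exact absurd (h1.symm.trans h2) (ne_of_lt hij)
      · rintro rfl
        exact ⟨Or.inr ⟨(i, j), ⟨hij, Or.inl rfl⟩, rfl⟩, Or.inr ⟨(i, j), ⟨hij, Or.inr rfl⟩, rfl⟩⟩

private lemma card_lt_pairs (n : ℕ) : 2 * (sP n).card = n * (n - 1) := by
  have h1 : ((Finset.univ : Finset (Fin n × Fin n)).filter fun p => p.2 < p.1).card
      = (sP n).card :=
    Finset.card_equiv (Equiv.prodComm _ _) (fun p => by simp [sP])
  have hdisj : Disjoint (sP n)
      ((Finset.univ : Finset (Fin n × Fin n)).filter fun p => p.2 < p.1) := by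
    rw [Finset.disjoint_left]
    intro p hp1 hp2
    simp only [sP, Finset.mem_filter] at hp1 hp2
    exact absurd hp2.2 (lt_asymm hp1.2)
  have hunion : (sP n) ∪
      ((Finset.univ : Finset (Fin n × Fin n)).filter fun p => p.2 < p.1)
      = (Finset.univ : Finset (Fin n × Fin n)).filter fun p => p.1 ≠ p.2 := by
    ext p
    simp only [sP, Finset.mem_union, Finset.mem_filter, Finset.mem_univ, true_and]
    constructor
    · rintro (h | h)
      · exact ne_of_lt h
      · exact (ne_of_lt h).symm
    · exact fun h => lt_or_gt_of_ne h
  have hcard : ((Finset.univ : Finset (Fin n × Fin n)).filter fun p => p.1 ≠ p.2).card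
      = n * n - n := by
    have : ((Finset.univ : Finset (Fin n × Fin n)).filter fun p => p.1 ≠ p.2)
        = (Finset.univ : Finset (Fin n)).offDiag := by
      ext p; simp [Finset.mem_offDiag]
    rw [this, Finset.offDiag_card]
    simp
  have := Finset.card_union_of_disjoint hdisj
  rw [hunion, hcard, h1] at this
  have hmn : n * n - n = n * (n - 1) := by
    cases n with
    | zero => simp
    | succ m => simp [Nat.succ_sub_one, Nat.succ_mul, Nat.mul_succ]
  omega

private lemma sP_filter_card (i : Fin n) :
    ((sP n).filter fun p => p.1 = i ∨ p.2 = i).card = n - 1 := by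
  have h : ((sP n).filter fun p => p.1 = i ∨ p.2 = i).card
      = (Finset.univ.erase i).card := by
    refine Finset.card_nbij' (fun p => if p.1 = i then p.2 else p.1)
      (fun a => if i < a then (i, a) else (a, i)) ?_ ?_ ?_ ?_
    · intro p hp
      simp only [Finset.mem_coe, sP, Finset.mem_filter, Finset.mem_univ, true_and] at hp
      simp only [Finset.mem_coe, Finset.mem_erase, Finset.mem_univ, and_true]
      split_ifs with h1
      · exact fun h2 => absurd (h1 ▸ h2 ▸ hp.1) (lt_irrefl _)
      · rcases hp.2 with h2 | h2
        · exact absurd h2 h1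
        · exact fun h3 => absurd (h3 ▸ h2 ▸ hp.1) (lt_irrefl _)
    · intro a ha
      simp only [Finset.mem_coe, Finset.mem_erase, Finset.mem_univ, and_true] at ha
      simp only [Finset.mem_coe, sP, Finset.mem_filter, Finset.mem_univ, true_and]
      rcases (ha.lt_or_gt) with h1 | h1
      · rw [if_neg (asymm h1)]; exact ⟨h1, Or.inr rfl⟩
      · rw [if_pos h1]; exact ⟨h1, Or.inl rfl⟩
    · intro p hp
      simp only [Finset.mem_coe, sP, Finset.mem_filter, Finset.mem_univ, true_and] at hp
      dsimp only
      split_ifs with h1 h2 h3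
      · exact Prod.ext h1.symm rfl
      · exact absurd (h1 ▸ hp.1) h2
      · rcases hp.2 with h | h
        · exact absurd h h1
        · exact absurd (h ▸ hp.1) (asymm h3)
      · rcases hp.2 with h | h
        · exact absurd h h1
        · exact Prod.ext rfl h.symm
    · intro a ha
      simp only [Finset.mem_coe, Finset.mem_erase, Finset.mem_univ, and_true] at ha
      dsimp only
      rcases ha.lt_or_gt with h | h
      · rw [if_neg (asymm h)]; simp [ha]
      · rw [if_pos h]; simp
  rw [h, Finset.card_erase_of_mem (Finset.mem_univ i), Finset.card_univ, Fintype.card_fin]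

end scidFamily

theorem scid_construction (F V : Type*) [Field F] [Fintype F]
    [AddCommGroup V] [Module F V] [FiniteDimensional F V]
    (n k t : ℕ) (hn : 2 ≤ n) (ht : t ≤ k) (hcond : (n - 1) * (k - t) ≤ k)
    (Vij : Fin n → Fin n → Submodule F V)
    (hsymm : ∀ i j, Vij i j = Vij j i)
    (hVdim : ∀ i j, i ≠ j → finrank F ↥(Vij i j) = k - t)
    (U : Fin n → Submodule F V)
    (hUdim : ∀ i, finrank F ↥(U i) = k - (n - 1) * (k - t))
    (hdirect :
      finrank F ↥((⨆ i, U i) ⊔ ⨆ i, ⨆ j, ⨆ (_ : i < j), Vij i j) =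
        n * (k - (n - 1) * (k - t)) + n * (n - 1) * (k - t) / 2)
    (π : Fin n → Submodule F V)
    (hπ : ∀ i, π i = U i ⊔ ⨆ j, ⨆ (_ : j ≠ i), Vij i j) :
    (∀ i, finrank F ↥(π i) = k) ∧
      (∀ i j, i ≠ j → π i ⊓ π j = Vij i j) ∧
      (∀ i j, i ≠ j → finrank F ↥(π i ⊓ π j) = k - t) ∧
      finrank F ↥(⨆ i, π i) +
        finrank F ↥(⨆ i, ⨆ j, ⨆ (_ : i < j), π i ⊓ π j) = n * k := by
  classical
  set m := (n - 1) * (k - t) with hm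
  set c := (sP n).card with hc
  have hc2 : 2 * c = n * (n - 1) := card_lt_pairs n
  -- the value of each member of the family
  have hWU : ∀ i, sW U Vij (Sum.inl i) = U i := fun i => rfl
  have hWV : ∀ p : Fin n × Fin n, p.1 < p.2 → sW U Vij (Sum.inr p) = Vij p.1 p.2 :=
    fun p hp => by simp [sW, hp]
  -- the total sum of the ranks
  have hsum : ∑ x, finrank F ↥(sW U Vij x) = n * (k - m) + c * (k - t) := by
    rw [Fintype.sum_sum_type]
    have h1 : ∑ i, finrank F ↥(sW U Vij (Sum.inl i)) = n * (k - m) := by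
      rw [Finset.sum_congr rfl fun i _ => by rw [hWU i, hUdim i], Finset.sum_const,
        Finset.card_univ, Fintype.card_fin, smul_eq_mul]
    have h2 : ∑ p : Fin n × Fin n, finrank F ↥(sW U Vij (Sum.inr p)) = c * (k - t) := by
      have he : ∀ p : Fin n × Fin n, finrank F ↥(sW U Vij (Sum.inr p))
          = if p.1 < p.2 then (k - t) else 0 := fun p => by
        by_cases h : p.1 < p.2
        · rw [hWV p h, if_pos h]
          exact hVdim _ _ (ne_of_lt h)
        · rw [if_neg h]
          have : sW U Vij (Sum.inr p) = ⊥ := by simp [sW, h]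
          rw [this]
          exact finrank_bot F V
      rw [Finset.sum_congr rfl fun p _ => he p, ← Finset.sum_filter, Finset.sum_const,
        smul_eq_mul]
      rfl
    rw [h1, h2]
  -- the direct sum hypothesis in family form
  have hkey : finrank F ↥(⨆ x, sW U Vij x) = ∑ x, finrank F ↥(sW U Vij x) := by
    rw [sW_total, hdirect, hsum]
    have hdiv : n * (n - 1) * (k - t) / 2 = c * (k - t) := by
      rw [show n * (n - 1) * (k - t) = 2 * (c * (k - t)) by rw [← hc2]; ring]
      exact Nat.mul_div_cancel_left _ (by norm_num)
    rw [hdiv]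
  have hrank := fun A => (scid_key_rank_compl (sW U Vij) hkey A).1
  -- π in family form
  have hπ' : ∀ i, π i = ⨆ x ∈ sA n i, sW U Vij x := fun i => by
    rw [hπ i, sA_biSup U Vij hsymm i]
  -- Part 1 : ranks of the π i
  have part1 : ∀ i, finrank F ↥(π i) = k := by
    intro i
    rw [hπ' i, hrank (sA n i)]
    have hdisj : Disjoint ({Sum.inl i} : Finset (Fin n ⊕ Fin n × Fin n))
        (((sP n).filter fun p => p.1 = i ∨ p.2 = i).image Sum.inr) := by
      rw [Finset.disjoint_left]
      rintro x hx1 hx2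
      simp only [Finset.mem_singleton] at hx1
      subst hx1
      exact absurd hx2 (by simp)
    rw [sA, Finset.sum_union hdisj, Finset.sum_singleton,
      Finset.sum_image (fun x _ y _ h => Sum.inr_injective h)]
    have he : ∀ p ∈ (sP n).filter fun p => p.1 = i ∨ p.2 = i,
        finrank F ↥(sW U Vij (Sum.inr p)) = k - t := by
      intro p hp
      simp only [sP, Finset.mem_filter, Finset.mem_univ, true_and] at hp
      rw [hWV p hp.1]
      exact hVdim _ _ (ne_of_lt hp.1)
    rw [Finset.sum_congr rfl he, Finset.sum_const, sP_filter_card i, smul_eq_mul, hWU,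
      hUdim i]
    omega
  -- Part 2 : the pairwise intersections
  have key2 : ∀ i j : Fin n, i < j → π i ⊓ π j = Vij i j := by
    intro i j hij
    rw [hπ' i, hπ' j, scid_key_inf (sW U Vij) hkey, sA_inter hij]
    rw [show ({Sum.inr (i, j)} : Finset (Fin n ⊕ Fin n × Fin n))
      = {Sum.inr (i, j)} from rfl]
    rw [Finset.iSup_singleton]
    exact hWV (i, j) hij
  have part2 : ∀ i j, i ≠ j → π i ⊓ π j = Vij i j := by
    intro i j hij
    rcases hij.lt_or_gt with h | h
    · exact key2 i j h
    · rw [inf_comm, key2 j i h, hsymm]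
  -- Part 3
  have part3 : ∀ i j, i ≠ j → finrank F ↥(π i ⊓ π j) = k - t := by
    intro i j hij
    rw [part2 i j hij]
    exact hVdim i j hij
  -- Part 4
  have hS : (⨆ i, π i) = ⨆ x, sW U Vij x := by
    apply le_antisymm
    · refine iSup_le fun i => ?_
      rw [hπ' i]
      exact iSup₂_le fun x _ => le_iSup _ x
    · refine iSup_le fun x => ?_
      cases x with
      | inl a =>
          refine le_iSup_of_le a ?_
          rw [hWU a, hπ a]
          exact le_sup_left
      | inr p =>
          by_cases h : p.1 < p.2
          · refine le_iSup_of_le p.1 ?_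
            rw [hWV p h, hπ p.1]
            exact le_sup_of_le_right (le_iSup₂_of_le p.2 (ne_of_gt h) le_rfl)
          · have : sW U Vij (Sum.inr p) = ⊥ := by simp [sW, h]
            rw [this]
            exact bot_le
  have hI : (⨆ i, ⨆ j, ⨆ _ : i < j, π i ⊓ π j)
      = ⨆ x ∈ (sP n).image Sum.inr, sW U Vij x := by
    have h1 : (⨆ i, ⨆ j, ⨆ _ : i < j, π i ⊓ π j) = ⨆ i, ⨆ j, ⨆ _ : i < j, Vij i j :=
      iSup_congr fun i => iSup_congr fun j => iSup_congr fun h => part2 i j (ne_of_lt h)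
    rw [h1]
    apply le_antisymm
    · refine iSup_le fun i => iSup_le fun j => iSup_le fun hij => ?_
      refine le_iSup₂_of_le (Sum.inr (i, j)) ?_ ?_
      · simp only [Finset.mem_image, sP, Finset.mem_filter, Finset.mem_univ, true_and]
        exact ⟨(i, j), hij, rfl⟩
      · rw [hWV (i, j) hij]
    · refine iSup₂_le fun x hx => ?_
      simp only [Finset.mem_image, sP, Finset.mem_filter, Finset.mem_univ, true_and] at hx
      obtain ⟨p, hp, rfl⟩ := hx
      rw [hWV p hp]
      exact le_iSup_of_le p.1 (le_iSup_of_le p.2 (le_iSup_of_le hp le_rfl))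
  have hRS : finrank F ↥(⨆ i, π i) = n * (k - m) + c * (k - t) := by
    rw [hS, hkey, hsum]
  have hRI : finrank F ↥(⨆ i, ⨆ j, ⨆ _ : i < j, π i ⊓ π j) = c * (k - t) := by
    rw [hI, hrank]
    rw [Finset.sum_image (fun x _ y _ h => Sum.inr_injective h)]
    have he : ∀ p ∈ sP n, finrank F ↥(sW U Vij (Sum.inr p)) = k - t := by
      intro p hp
      simp only [sP, Finset.mem_filter, Finset.mem_univ, true_and] at hp
      rw [hWV p hp]
      exact hVdim _ _ (ne_of_lt hp)
    rw [Finset.sum_congr rfl he, Finset.sum_const, smul_eq_mul, ← hc]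
  refine ⟨part1, part2, part3, ?_⟩
  rw [hRS, hRI, add_assoc, ← two_mul, ← mul_assoc, hc2, mul_assoc, ← hm, ← Nat.mul_add,
    Nat.sub_add_cancel hcond]
end

section
/- Let {π₁,...,πₙ} be a (k,k-t)-SCID with (n-1)(k-t) ≤ k, S its span, and I the span of all pairwise intersections. If dim S + dim I = nk, then dim I = n(n-1)(k-t)/2, i.e., the pairwise intersections πᵢ∩πⱼ span a space of maximal possible dimension. -/
open Module

section Aux

variable {F V : Type*} [Field F] [AddCommGroup V] [Module F V] [FiniteDimensional F V]

private lemma aux_sup_le_sum {ι : Type*} (s : Finset ι) (W : ι → Submodule F V) :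
    finrank F ↥(s.sup W) ≤ ∑ i ∈ s, finrank F ↥(W i) := by
  induction s using Finset.cons_induction with
  | empty => simp
  | cons a s ha ih =>
    rw [Finset.sup_cons, Finset.sum_cons]
    have h := Submodule.finrank_sup_add_finrank_inf_eq (W a) (s.sup W)
    omega

private lemma aux_disjoint {ι : Type*} [DecidableEq ι] (s : Finset ι) (W : ι → Submodule F V)
    (h : finrank F ↥(s.sup W) = ∑ i ∈ s, finrank F ↥(W i))
    {a : ι} (ha : a ∈ s) :
    W a ⊓ (s.erase a).sup W = ⊥ := by
  have hs : s.sup W = W a ⊔ (s.erase a).sup W := by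
    rw [← Finset.sup_insert, Finset.insert_erase ha]
  have h2 := Submodule.finrank_sup_add_finrank_inf_eq (W a) ((s.erase a).sup W)
  have h3 := aux_sup_le_sum (s.erase a) W
  have h4 : finrank F ↥(W a) + ∑ i ∈ s.erase a, finrank F ↥(W i)
      = ∑ i ∈ s, finrank F ↥(W i) := Finset.add_sum_erase s (fun i => finrank F ↥(W i)) ha
  rw [← hs] at h2
  have h5 : finrank F ↥(W a ⊓ (s.erase a).sup W) = 0 := by omega
  exact Submodule.finrank_eq_zero.mp h5

private lemma aux_sup_eq_sum {ι : Type*} [DecidableEq ι] (s : Finset ι) (W : ι → Submodule F V)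
    (h : ∀ a ∈ s, W a ⊓ (s.erase a).sup W = ⊥) :
    finrank F ↥(s.sup W) = ∑ i ∈ s, finrank F ↥(W i) := by
  classical
  revert h
  induction s using Finset.cons_induction with
  | empty => intro _; simp
  | cons a s ha ih =>
    intro h
    have h1 : W a ⊓ s.sup W = ⊥ := by
      have := h a (Finset.mem_cons_self a s)
      rwa [Finset.erase_cons] at this
    have h2 : ∀ b ∈ s, W b ⊓ (s.erase b).sup W = ⊥ := by
      intro b hb
      have hb' := h b (Finset.mem_cons_of_mem hb)
      have hsub : (s.erase b).sup W ≤ ((Finset.cons a s ha).erase b).sup W :=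
        Finset.sup_mono (Finset.erase_subset_erase _ (Finset.subset_cons ha))
      exact le_bot_iff.mp ((inf_le_inf_left _ hsub).trans_eq hb')
    rw [Finset.sup_cons, Finset.sum_cons, ← ih h2]
    have h3 := Submodule.finrank_sup_add_finrank_inf_eq (W a) (s.sup W)
    rw [h1] at h3
    simpa using h3

private def Spart {F V : Type*} [Field F] [AddCommGroup V] [Module F V]
    (n : ℕ) (ρ : Fin n → Submodule F V) (m : ℕ) : Submodule F V :=
  (Finset.univ.filter (fun i : Fin n => (i : ℕ) < m)).sup ρ

private lemma aux_key {n k : ℕ} (ρ : Fin n → Submodule F V)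
    (hd : ∀ i, finrank F ↥(ρ i) = k)
    (hmax : finrank F ↥(Finset.univ.sup ρ) +
      finrank F ↥(Finset.univ.sup (fun i => (Finset.Iio i).sup (fun j => ρ j ⊓ ρ i))) = n * k) :
    finrank F ↥(Finset.univ.sup (fun i => (Finset.Iio i).sup (fun j => ρ j ⊓ ρ i))) =
      ∑ i, finrank F ↥((Finset.Iio i).sup (fun j => ρ j ⊓ ρ i)) := by
  classical
  have htel : ∀ m, m ≤ n → finrank F ↥(Spart n ρ m) +
      ∑ i ∈ Finset.univ.filter (fun i : Fin n => (i : ℕ) < m),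
        finrank F ↥(ρ i ⊓ Spart n ρ (i : ℕ)) = m * k := by
    intro m
    induction m with
    | zero =>
      intro _
      have he : (Finset.univ.filter (fun i : Fin n => (i : ℕ) < 0)) = ∅ := by simp
      unfold Spart
      rw [he]
      simp
    | succ m ih =>
      intro hm
      have hmn : m < n := hm
      have hins : (Finset.univ.filter (fun i : Fin n => (i : ℕ) < m + 1))
          = insert ⟨m, hmn⟩ (Finset.univ.filter (fun i : Fin n => (i : ℕ) < m)) := by
        ext j
        simp only [Finset.mem_filter, Finset.mem_univ, true_and, Finset.mem_insert, Fin.ext_iff]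
        omega
      have hnotmem : (⟨m, hmn⟩ : Fin n) ∉ Finset.univ.filter (fun i : Fin n => (i : ℕ) < m) := by
        simp
      have hSsucc : Spart n ρ (m + 1) = ρ ⟨m, hmn⟩ ⊔ Spart n ρ m := by
        unfold Spart
        rw [hins, Finset.sup_insert]
      have h2 := Submodule.finrank_sup_add_finrank_inf_eq (ρ ⟨m, hmn⟩) (Spart n ρ m)
      have ih' := ih (Nat.le_of_succ_le hm)
      have hdm := hd ⟨m, hmn⟩
      rw [hSsucc, hins, Finset.sum_insert hnotmem, Nat.succ_mul]
      simp only [Fin.val_mk]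
      omega
  have huniv : (Finset.univ.filter (fun i : Fin n => (i : ℕ) < n)) = Finset.univ := by
    ext i
    simp [i.isLt]
  have htel' := htel n le_rfl
  rw [huniv] at htel'
  have hSn : Spart n ρ n = Finset.univ.sup ρ := by
    unfold Spart
    rw [huniv]
  rw [hSn] at htel'
  have hle1 : ∀ i : Fin n, (Finset.Iio i).sup (fun j => ρ j ⊓ ρ i) ≤ ρ i ⊓ Spart n ρ (i : ℕ) := by
    intro i
    refine Finset.sup_le fun j hj => le_inf inf_le_right (inf_le_left.trans ?_)
    exact Finset.le_sup (Finset.mem_filter.mpr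
      ⟨Finset.mem_univ j, Fin.lt_def.mp (Finset.mem_Iio.mp hj)⟩)
  have hsum1 : ∑ i, finrank F ↥((Finset.Iio i).sup (fun j => ρ j ⊓ ρ i)) ≤
      ∑ i ∈ Finset.univ, finrank F ↥(ρ i ⊓ Spart n ρ (i : ℕ)) :=
    Finset.sum_le_sum (fun i _ => Submodule.finrank_mono (hle1 i))
  have hsub := aux_sup_le_sum Finset.univ (fun i => (Finset.Iio i).sup (fun j => ρ j ⊓ ρ i))
  have h0 := Nat.add_left_cancel (htel'.trans hmax.symm)
  omega

end Aux

theorem scid_max_implies_I_max (F V : Type*) [Field F] [Fintype F]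
    [AddCommGroup V] [Module F V] [FiniteDimensional F V]
    (n k t : ℕ) (hn : 2 ≤ n) (ht : t ≤ k) (hcond : (n - 1) * (k - t) ≤ k)
    (π : Fin n → Submodule F V) (hinj : Function.Injective π)
    (hdim : ∀ i, finrank F ↥(π i) = k)
    (hint : ∀ i j, i ≠ j → finrank F ↥(π i ⊓ π j) = k - t)
    (hmax : finrank F ↥(⨆ i, π i) +
        finrank F ↥(⨆ i, ⨆ j, ⨆ (_ : i < j), π i ⊓ π j) = n * k) :
    finrank F ↥(⨆ i, ⨆ j, ⨆ (_ : i < j), π i ⊓ π j) =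
      n * (n - 1) * (k - t) / 2 := by
  classical
  obtain ⟨m, rfl⟩ : ∃ m, n = m + 2 := ⟨n - 2, by omega⟩
  set I : Submodule F V := ⨆ i, ⨆ j, ⨆ (_ : i < j), π i ⊓ π j with hIdef
  have hpair : ∀ a b : Fin (m + 2), a ≠ b → π a ⊓ π b ≤ I := by
    intro a b hab
    rcases lt_or_gt_of_ne hab with h | h
    · exact le_iSup_of_le a (le_iSup_of_le b (le_iSup_of_le h le_rfl))
    · rw [inf_comm]
      exact le_iSup_of_le b (le_iSup_of_le a (le_iSup_of_le h le_rfl))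
  have hIeq : ∀ σ : Equiv.Perm (Fin (m + 2)),
      I = Finset.univ.sup (fun i => (Finset.Iio i).sup (fun j => π (σ j) ⊓ π (σ i))) := by
    intro σ
    apply le_antisymm
    · refine iSup_le fun a => iSup_le fun b => iSup_le fun hab => ?_
      have hpq : σ.symm a ≠ σ.symm b := fun h => (ne_of_lt hab) (by
        have := congrArg σ h
        simpa using this)
      rcases lt_or_gt_of_ne hpq with h | h
      · have : π a ⊓ π b ≤ (Finset.Iio (σ.symm b)).sup
            (fun j => π (σ j) ⊓ π (σ (σ.symm b))) := by
          have hle := Finset.le_sup (f := fun j => π (σ j) ⊓ π (σ (σ.symm b)))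
            (Finset.mem_Iio.mpr h)
          simpa using hle
        exact this.trans (Finset.le_sup (f := fun i => (Finset.Iio i).sup (fun j => π (σ j) ⊓ π (σ i))) (Finset.mem_univ _))
      · have : π a ⊓ π b ≤ (Finset.Iio (σ.symm a)).sup
            (fun j => π (σ j) ⊓ π (σ (σ.symm a))) := by
          have hle := Finset.le_sup (f := fun j => π (σ j) ⊓ π (σ (σ.symm a)))
            (Finset.mem_Iio.mpr h)
          rw [inf_comm]
          simpa using hle
        exact this.trans (Finset.le_sup (f := fun i => (Finset.Iio i).sup (fun j => π (σ j) ⊓ π (σ i))) (Finset.mem_univ _))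
    · refine Finset.sup_le fun i _ => Finset.sup_le fun j hj => ?_
      have hne : σ j ≠ σ i := fun h => (ne_of_lt (Finset.mem_Iio.mp hj)) (σ.injective h)
      exact hpair _ _ hne
  have hSeq : ∀ σ : Equiv.Perm (Fin (m + 2)),
      (⨆ i, π i) = Finset.univ.sup (fun i => π (σ i)) := by
    intro σ
    rw [← Finset.sup_univ_eq_iSup]
    apply le_antisymm
    · refine Finset.sup_le fun i _ => ?_
      have := Finset.le_sup (f := fun j => π (σ j)) (Finset.mem_univ (σ.symm i))
      simpa using this
    · exact Finset.sup_le fun i _ => Finset.le_sup (Finset.mem_univ (σ i))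
  have hkey : ∀ σ : Equiv.Perm (Fin (m + 2)),
      finrank F ↥I = ∑ i, finrank F ↥((Finset.Iio i).sup (fun j => π (σ j) ⊓ π (σ i))) := by
    intro σ
    have h := aux_key (fun i => π (σ i)) (fun i => hdim (σ i)) (by
      rw [← hSeq σ, ← hIeq σ]
      exact hmax)
    rw [hIeq σ]
    exact h
  have hdisj : ∀ (σ : Equiv.Perm (Fin (m + 2))) (a : Fin (m + 2)),
      (Finset.Iio a).sup (fun j => π (σ j) ⊓ π (σ a)) ⊓
        (Finset.univ.erase a).sup
          (fun i => (Finset.Iio i).sup (fun j => π (σ j) ⊓ π (σ i))) = ⊥ := by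
    intro σ a
    have h := hkey σ
    rw [hIeq σ] at h
    exact aux_disjoint Finset.univ _ h (Finset.mem_univ a)
  have hzero : (0 : Fin (m + 2)) ≠ 1 := by
    simp [Fin.ext_iff]
  have hIio1 : Finset.Iio (1 : Fin (m + 2)) = {0} := by
    ext j
    simp only [Finset.mem_Iio, Finset.mem_singleton, Fin.lt_def, Fin.ext_iff, Fin.val_one,
      Fin.val_zero]
    omega
  have hpairdisj : ∀ (i a : Fin (m + 2)), a < i →
      (π a ⊓ π i) ⊓ ((Finset.Iio i).erase a).sup (fun j => π j ⊓ π i) = ⊥ := by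
    intro i a hai
    have hia : a ≠ i := ne_of_lt hai
    set τ : Equiv.Perm (Fin (m + 2)) := Equiv.swap 0 a with hτ
    have hτ0 : τ 0 = a := Equiv.swap_apply_left 0 a
    have hc0 : τ.symm i ≠ 0 := by
      intro h
      have : i = τ 0 := by rw [← h, Equiv.apply_symm_apply]
      rw [hτ0] at this
      exact hia this.symm
    set σ : Equiv.Perm (Fin (m + 2)) := (Equiv.swap 1 (τ.symm i)).trans τ with hσ
    have hσ0 : σ 0 = a := by
      have h1 : (Equiv.swap (1 : Fin (m + 2)) (τ.symm i)) 0 = 0 :=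
        Equiv.swap_apply_of_ne_of_ne hzero (Ne.symm hc0)
      rw [hσ, Equiv.trans_apply, h1, hτ0]
    have hσ1 : σ 1 = i := by
      rw [hσ, Equiv.trans_apply, Equiv.swap_apply_left, Equiv.apply_symm_apply]
    have hd := hdisj σ 1
    have hfam1 : (Finset.Iio (1 : Fin (m + 2))).sup (fun j => π (σ j) ⊓ π (σ 1))
        = π a ⊓ π i := by
      rw [hIio1, Finset.sup_singleton, hσ0, hσ1]
    have hle : ((Finset.Iio i).erase a).sup (fun j => π j ⊓ π i) ≤
        (Finset.univ.erase (1 : Fin (m + 2))).sup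
          (fun p => (Finset.Iio p).sup (fun j => π (σ j) ⊓ π (σ p))) := by
      refine Finset.sup_le fun j hj => ?_
      obtain ⟨hja, hji⟩ := Finset.mem_erase.mp hj
      have hji' : j < i := Finset.mem_Iio.mp hji
      have hσp : σ (σ.symm j) = j := Equiv.apply_symm_apply σ j
      have hp0 : σ.symm j ≠ 0 := fun h => hja (by rw [← hσp, h, hσ0])
      have hp1 : σ.symm j ≠ 1 := fun h => (ne_of_lt hji') (by rw [← hσp, h, hσ1])
      have hv0 : ((σ.symm j : Fin (m + 2)) : ℕ) ≠ 0 := by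
        intro h
        exact hp0 (Fin.ext (by simp [h]))
      have hv1 : ((σ.symm j : Fin (m + 2)) : ℕ) ≠ 1 := by
        intro h
        exact hp1 (Fin.ext (by simp [h]))
      have h1p : (1 : Fin (m + 2)) < σ.symm j := by
        rw [Fin.lt_def, Fin.val_one]
        omega
      calc π j ⊓ π i = π (σ 1) ⊓ π (σ (σ.symm j)) := by rw [hσ1, hσp, inf_comm]
        _ ≤ (Finset.Iio (σ.symm j)).sup (fun q => π (σ q) ⊓ π (σ (σ.symm j))) :=
            Finset.le_sup (f := fun q => π (σ q) ⊓ π (σ (σ.symm j))) (Finset.mem_Iio.mpr h1p)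
        _ ≤ _ := Finset.le_sup (f := fun p => (Finset.Iio p).sup (fun j => π (σ j) ⊓ π (σ p)))
            (Finset.mem_erase.mpr ⟨hp1, Finset.mem_univ _⟩)
    have hfin : (π a ⊓ π i) ⊓ ((Finset.Iio i).erase a).sup (fun j => π j ⊓ π i) ≤ ⊥ := by
      calc (π a ⊓ π i) ⊓ ((Finset.Iio i).erase a).sup (fun j => π j ⊓ π i)
          ≤ (π a ⊓ π i) ⊓ (Finset.univ.erase (1 : Fin (m + 2))).sup
              (fun p => (Finset.Iio p).sup (fun j => π (σ j) ⊓ π (σ p))) :=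
            inf_le_inf_left _ hle
        _ = ⊥ := by rw [← hfam1]; exact hd
    exact le_bot_iff.mp hfin
  have hfr : ∀ i : Fin (m + 2),
      finrank F ↥((Finset.Iio i).sup (fun j => π j ⊓ π i)) = (i : ℕ) * (k - t) := by
    intro i
    have h := aux_sup_eq_sum (Finset.Iio i) (fun j => π j ⊓ π i)
      (fun a ha => hpairdisj i a (Finset.mem_Iio.mp ha))
    rw [h, Finset.sum_congr rfl
      (fun j hj => hint j i (ne_of_lt (Finset.mem_Iio.mp hj))),
      Finset.sum_const, smul_eq_mul]
    congr 1
    simp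
  have hId := hkey (Equiv.refl _)
  simp only [Equiv.refl_apply] at hId
  calc finrank F ↥I = ∑ i : Fin (m + 2), (i : ℕ) * (k - t) := by
        rw [hId]
        exact Finset.sum_congr rfl (fun i _ => hfr i)
    _ = (∑ i ∈ Finset.range (m + 2), i) * (k - t) := by
        rw [Finset.sum_mul]
        exact Fin.sum_univ_eq_sum_range (fun i => i * (k - t)) (m + 2)
    _ = (m + 2) * (m + 2 - 1) * (k - t) / 2 := by
        have h2 := Finset.sum_range_id_mul_two (m + 2)
        rw [show (m + 2) * (m + 2 - 1) * (k - t)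
            = (∑ i ∈ Finset.range (m + 2), i) * (k - t) * 2 from by rw [← h2]; ring,
          Nat.mul_div_cancel _ (by norm_num : 0 < 2)]
end

section
/- If (n-1)(k-t) > k, then there is no (k,k-t)-SCID {π₁,...,πₙ} with dim S + dim I = nk; i.e., every such SCID satisfies dim S + dim I ≤ nk - 1. -/
open Module

open Submodule

set_option linter.unusedSectionVars false
set_option linter.unusedVariables false

section Aux
variable {F V : Type*} [Field F] [AddCommGroup V] [Module F V] [FiniteDimensional F V]
variable {n : ℕ} (π : Fin n → Submodule F V)

noncomputable def SSx (s : Finset (Fin n)) : Submodule F V := ⨆ i ∈ s, π i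
noncomputable def IIx (s : Finset (Fin n)) : Submodule F V :=
  ⨆ i ∈ s, ⨆ j ∈ s, ⨆ (_ : i ≠ j), π i ⊓ π j
noncomputable def JJx (a : Fin n) (s : Finset (Fin n)) : Submodule F V := ⨆ j ∈ s, π a ⊓ π j

lemma pair_le_IIx {s : Finset (Fin n)} {a b : Fin n} (ha : a ∈ s) (hb : b ∈ s) (hab : a ≠ b) :
    π a ⊓ π b ≤ IIx π s :=
  le_iSup₂_of_le a ha (le_iSup₂_of_le b hb (le_iSup_of_le hab le_rfl))

lemma pair_le_JJx {s : Finset (Fin n)} {a b : Fin n} (hb : b ∈ s) :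
    π a ⊓ π b ≤ JJx π a s :=
  le_iSup₂_of_le b hb le_rfl

lemma IIx_mono {s t : Finset (Fin n)} (hst : s ⊆ t) : IIx π s ≤ IIx π t :=
  iSup₂_le fun i hi => iSup₂_le fun j hj => iSup_le fun hij =>
    pair_le_IIx π (hst hi) (hst hj) hij

lemma SSx_insert (a : Fin n) (s : Finset (Fin n)) :
    SSx π (insert a s) = π a ⊔ SSx π s := by
  simp only [SSx]; exact Finset.iSup_insert a s π

lemma JJx_insert (i₀ a : Fin n) (s : Finset (Fin n)) :
    JJx π i₀ (insert a s) = (π i₀ ⊓ π a) ⊔ JJx π i₀ s := by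
  simp only [JJx]; exact Finset.iSup_insert a s _

lemma IIx_insert {a : Fin n} {s : Finset (Fin n)} (ha : a ∉ s) :
    IIx π (insert a s) = IIx π s ⊔ JJx π a s := by
  apply le_antisymm
  · refine iSup₂_le fun i hi => iSup₂_le fun j hj => iSup_le fun hij => ?_
    rcases Finset.mem_insert.mp hi with hia | hi'
    · rcases Finset.mem_insert.mp hj with hja | hj'
      · exact absurd (hia.trans hja.symm) hij
      · rw [hia]
        exact le_sup_of_le_right (pair_le_JJx π hj')
    · rcases Finset.mem_insert.mp hj with hja | hj'
      · rw [hja, inf_comm]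
        exact le_sup_of_le_right (pair_le_JJx π hi')
      · exact le_sup_of_le_left (pair_le_IIx π hi' hj' hij)
  · refine sup_le (IIx_mono π (Finset.subset_insert a s)) ?_
    refine iSup₂_le fun j hj => pair_le_IIx π (Finset.mem_insert_self a s)
      (Finset.mem_insert_of_mem hj) (fun h => ha (h ▸ hj))

lemma JJx_le_inf (a : Fin n) (s : Finset (Fin n)) :
    JJx π a s ≤ π a ⊓ SSx π s :=
  iSup₂_le fun j hj => le_inf inf_le_left (inf_le_right.trans (le_iSup₂_of_le j hj le_rfl))

lemma JJx_le_left (a : Fin n) (s : Finset (Fin n)) : JJx π a s ≤ π a :=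
  iSup₂_le fun _ _ => inf_le_left

lemma SSx_empty : SSx π ∅ = ⊥ := by simp [SSx]
lemma IIx_empty : IIx π ∅ = ⊥ := by simp [IIx]
lemma JJx_empty (a : Fin n) : JJx π a ∅ = ⊥ := by simp [JJx]

lemma step_ineq {k : ℕ} (hk : ∀ i, finrank F ↥(π i) = k) {a : Fin n} {s : Finset (Fin n)}
    (ha : a ∉ s) :
    finrank F ↥(SSx π (insert a s)) + finrank F ↥(IIx π (insert a s))
      + finrank F ↥(IIx π s ⊓ JJx π a s)
    ≤ finrank F ↥(SSx π s) + finrank F ↥(IIx π s) + k := by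
  have h1 : finrank F ↥(SSx π (insert a s)) + finrank F ↥(π a ⊓ SSx π s)
      = k + finrank F ↥(SSx π s) := by
    rw [SSx_insert, Submodule.finrank_sup_add_finrank_inf_eq, hk a]
  have h2 : finrank F ↥(IIx π (insert a s)) + finrank F ↥(IIx π s ⊓ JJx π a s)
      = finrank F ↥(IIx π s) + finrank F ↥(JJx π a s) := by
    rw [IIx_insert π ha, Submodule.finrank_sup_add_finrank_inf_eq]
  have h3 : finrank F ↥(JJx π a s) ≤ finrank F ↥(π a ⊓ SSx π s) :=
    Submodule.finrank_mono (JJx_le_inf π a s)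
  omega

lemma chain_ineq {k : ℕ} (hk : ∀ i, finrank F ↥(π i) = k) :
    ∀ (t s : Finset (Fin n)), Disjoint t s →
    finrank F ↥(SSx π (s ∪ t)) + finrank F ↥(IIx π (s ∪ t))
      ≤ finrank F ↥(SSx π s) + finrank F ↥(IIx π s) + t.card * k := by
  classical
  intro t
  induction t using Finset.induction_on with
  | empty => intro s _; rw [Finset.union_empty]; simp
  | @insert a t hat ih =>
    intro s hdisj
    have hd : Disjoint t s := (Finset.disjoint_insert_left.mp hdisj).2
    have has : a ∉ s := (Finset.disjoint_insert_left.mp hdisj).1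
    have haut : a ∉ s ∪ t := by simp [has, hat]
    have h1 := step_ineq π hk haut
    have h2 := ih s hd
    have hu : s ∪ insert a t = insert a (s ∪ t) := by
      ext x; simp [or_left_comm, or_comm]
    rw [hu, Finset.card_insert_of_notMem hat]
    have e1 := Nat.add_mul t.card 1 k
    have e2 := Nat.one_mul k
    omega

end Aux

theorem scid_no_max_when_cond_fails (F V : Type*) [Field F] [Fintype F]
    [AddCommGroup V] [Module F V] [FiniteDimensional F V]
    (n k t : ℕ) (hn : 2 ≤ n) (ht : t ≤ k) (hcond : k < (n - 1) * (k - t))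
    (π : Fin n → Submodule F V) (hinj : Function.Injective π)
    (hdim : ∀ i, finrank F ↥(π i) = k)
    (hint : ∀ i j, i ≠ j → finrank F ↥(π i ⊓ π j) = k - t) :
    finrank F ↥(⨆ i, π i) +
      finrank F ↥(⨆ i, ⨆ j, ⨆ (_ : i < j), π i ⊓ π j) ≤ n * k - 1 := by
  classical
  have hS : (⨆ i, π i) = SSx π Finset.univ := by simp [SSx]
  have hI : (⨆ i, ⨆ j, ⨆ (_ : i < j), π i ⊓ π j) = IIx π Finset.univ := by
    apply le_antisymm
    · exact iSup_le fun i => iSup_le fun j => iSup_le fun hij =>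
        pair_le_IIx π (Finset.mem_univ i) (Finset.mem_univ j) (ne_of_lt hij)
    · refine iSup₂_le fun i _ => iSup₂_le fun j _ => iSup_le fun hij => ?_
      rcases hij.lt_or_gt with h | h
      · exact le_iSup_of_le i (le_iSup_of_le j (le_iSup_of_le h le_rfl))
      · rw [inf_comm]
        exact le_iSup_of_le j (le_iSup_of_le i (le_iSup_of_le h le_rfl))
  rw [hS, hI]
  by_contra hcon
  push_neg at hcon
  have hbound : ∀ s : Finset (Fin n),
      finrank F ↥(SSx π s) + finrank F ↥(IIx π s) ≤ s.card * k := by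
    intro s
    have h := chain_ineq π hdim s ∅ (Finset.disjoint_empty_right s)
    rw [Finset.empty_union] at h
    rw [SSx_empty, IIx_empty, finrank_bot] at h
    simpa using h
  have htot : finrank F ↥(SSx π Finset.univ) + finrank F ↥(IIx π Finset.univ) ≤ n * k := by
    have h := hbound Finset.univ
    rwa [Finset.card_univ, Fintype.card_fin] at h
  have heq : finrank F ↥(SSx π Finset.univ) + finrank F ↥(IIx π Finset.univ) = n * k :=
    le_antisymm htot (Nat.le_of_pred_lt hcon)
  -- key: all the step disjointness conditions hold
  have hdisjI : ∀ (s : Finset (Fin n)) (a : Fin n), a ∉ s → IIx π s ⊓ JJx π a s = ⊥ := by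
    intro s a ha
    have h1 := step_ineq π hdim ha
    have hins : (insert a s).card = s.card + 1 := Finset.card_insert_of_notMem ha
    have hc : s.card + 1 ≤ n := by
      have := Finset.card_le_univ (insert a s)
      rwa [hins, Fintype.card_fin] at this
    have hcard : (Finset.univ \ insert a s).card = n - (s.card + 1) := by
      rw [Finset.card_sdiff_of_subset (Finset.subset_univ _), Finset.card_univ, Fintype.card_fin, hins]
    have h2 : finrank F ↥(SSx π Finset.univ) + finrank F ↥(IIx π Finset.univ)
        ≤ finrank F ↥(SSx π (insert a s)) + finrank F ↥(IIx π (insert a s))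
          + (n - (s.card + 1)) * k := by
      have h := chain_ineq π hdim (Finset.univ \ insert a s) (insert a s)
        Finset.sdiff_disjoint
      rwa [Finset.union_sdiff_of_subset (Finset.subset_univ _), hcard] at h
    have h3 := hbound s
    have e1 : (s.card + 1) * k = s.card * k + k := by rw [Nat.add_mul, Nat.one_mul]
    have e2 : (s.card + 1) * k + (n - (s.card + 1)) * k = n * k := by
      rw [← Nat.add_mul, Nat.add_sub_cancel' hc]
    have hd0 : finrank F ↥(IIx π s ⊓ JJx π a s) = 0 := by
      have : finrank F ↥(IIx π s ⊓ JJx π a s) ≤ 0 := by linarith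
      omega
    exact Submodule.finrank_eq_zero.mp hd0
  -- now show the intersections with π i₀ are independent
  set i₀ : Fin n := ⟨0, by omega⟩ with hi₀def
  have hrank : ∀ s : Finset (Fin n), i₀ ∉ s →
      finrank F ↥(JJx π i₀ s) = s.card * (k - t) := by
    intro s
    induction s using Finset.induction_on with
    | empty => intro _; simp [JJx_empty]
    | @insert a s has ih =>
      intro hi₀
      have hi₀s : i₀ ∉ s := fun h => hi₀ (Finset.mem_insert_of_mem h)
      have hi₀a : i₀ ≠ a := fun h => hi₀ (h ▸ Finset.mem_insert_self a s)
      have hmem : i₀ ∈ Finset.univ.erase a := Finset.mem_erase.mpr ⟨hi₀a, Finset.mem_univ _⟩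
      have hbot : (π i₀ ⊓ π a) ⊓ JJx π i₀ s = ⊥ := by
        have hd := hdisjI (Finset.univ.erase a) a (Finset.notMem_erase a _)
        have l1 : π i₀ ⊓ π a ≤ JJx π a (Finset.univ.erase a) := by
          rw [inf_comm]; exact pair_le_JJx π hmem
        have l2 : JJx π i₀ s ≤ IIx π (Finset.univ.erase a) := by
          refine iSup₂_le fun j hj => pair_le_IIx π hmem
            (Finset.mem_erase.mpr ⟨fun h => has (h ▸ hj), Finset.mem_univ _⟩)
            (fun h => hi₀s (by rw [h]; exact hj))
        refine le_bot_iff.mp ?_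
        calc (π i₀ ⊓ π a) ⊓ JJx π i₀ s
            ≤ JJx π a (Finset.univ.erase a) ⊓ IIx π (Finset.univ.erase a) := inf_le_inf l1 l2
          _ = IIx π (Finset.univ.erase a) ⊓ JJx π a (Finset.univ.erase a) := inf_comm _ _
          _ = ⊥ := hd
      have hsum := Submodule.finrank_sup_add_finrank_inf_eq (π i₀ ⊓ π a) (JJx π i₀ s)
      rw [hbot] at hsum
      rw [JJx_insert, Finset.card_insert_of_notMem has]
      have hia := hint i₀ a hi₀a
      have hih := ih hi₀s
      have e1 : (s.card + 1) * (k - t) = s.card * (k - t) + (k - t) := by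
        rw [Nat.add_mul, Nat.one_mul]
      simp only [finrank_bot] at hsum
      omega
  have hfin := hrank (Finset.univ.erase i₀) (Finset.notMem_erase i₀ _)
  have hcard : (Finset.univ.erase i₀).card = n - 1 := by
    rw [Finset.card_erase_of_mem (Finset.mem_univ _), Finset.card_univ, Fintype.card_fin]
  rw [hcard] at hfin
  have hle : finrank F ↥(JJx π i₀ (Finset.univ.erase i₀)) ≤ k := by
    have h := Submodule.finrank_mono (JJx_le_left π i₀ (Finset.univ.erase i₀))
    rwa [hdim i₀] at h
  rw [hfin] at hle
  exact absurd hle (not_le.mpr hcond)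
end

section
/- A (k,k-t)-sunflower with n elements spanning a space of dimension d exists if and only if there exists a partial t-spread of size n in a (d-k+t)-dimensional vector space over F_q spanning that whole space. -/
open Module

section Aux

variable {F : Type*} [Field F]

private lemma aux_finrank_map_mkQ {V : Type*} [AddCommGroup V] [Module F V]
    [FiniteDimensional F V] (C p : Submodule F V) (h : C ≤ p) :
    finrank F ↥(p.map C.mkQ) + finrank F ↥C = finrank F ↥p := by
  have hrange : p.map C.mkQ = LinearMap.range (C.mkQ ∘ₗ p.subtype) := by
    rw [LinearMap.range_comp, Submodule.range_subtype]
  have hker : LinearMap.ker (C.mkQ ∘ₗ p.subtype) = C.comap p.subtype := by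
    rw [LinearMap.ker_comp, Submodule.ker_mkQ]
  have hrn := LinearMap.finrank_range_add_finrank_ker (C.mkQ ∘ₗ p.subtype)
  rw [hker, (Submodule.comapSubtypeEquivOfLe h).finrank_eq, ← hrange] at hrn
  exact hrn

private lemma aux_finrank_prod {V W : Type*} [AddCommGroup V] [Module F V]
    [AddCommGroup W] [Module F W] [FiniteDimensional F V] [FiniteDimensional F W]
    (p : Submodule F V) (q : Submodule F W) :
    finrank F ↥(p.prod q) = finrank F ↥p + finrank F ↥q := by
  rw [LinearMap.prod_eq_sup_map]
  have h1 : finrank F ↥(p.map (LinearMap.inl F V W)) = finrank F ↥p :=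
    (Submodule.equivMapOfInjective _ LinearMap.inl_injective p).finrank_eq.symm
  have h2 : finrank F ↥(q.map (LinearMap.inr F V W)) = finrank F ↥q :=
    (Submodule.equivMapOfInjective _ LinearMap.inr_injective q).finrank_eq.symm
  have hinf : p.map (LinearMap.inl F V W) ⊓ q.map (LinearMap.inr F V W) = ⊥ := by
    rw [Submodule.map_inl, Submodule.map_inr, Submodule.prod_inf_prod]
    simp
  have := Submodule.finrank_sup_add_finrank_inf_eq
    (p.map (LinearMap.inl F V W)) (q.map (LinearMap.inr F V W))
  rw [hinf, finrank_bot, add_zero, h1, h2] at this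
  exact this

end Aux

theorem sunflower_iff_partial_spread (F : Type*) [Field F] [Fintype F]
    (n k t d : ℕ) (hn : 2 ≤ n) (ht : t ≤ k) (hk : k ≤ d) :
    (∃ (m : ℕ) (π : Fin n → Submodule F (Fin m → F)) (C : Submodule F (Fin m → F)),
        Function.Injective π ∧
        (∀ i, finrank F ↥(π i) = k) ∧
        finrank F ↥C = k - t ∧
        (∀ i j, i ≠ j → π i ⊓ π j = C) ∧
        finrank F ↥(⨆ i, π i) = d) ↔
      (∃ σ : Fin n → Submodule F (Fin (d - k + t) → F),
        Function.Injective σ ∧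
        (∀ i, finrank F ↥(σ i) = t) ∧
        (∀ i j, i ≠ j → σ i ⊓ σ j = ⊥) ∧
        (⨆ i, σ i) = ⊤) := by
  constructor
  · rintro ⟨m, π, C, hinj, hdim, hC, hint, hsup⟩
    -- the center is contained in every petal
    have hCle : ∀ i, C ≤ π i := by
      intro i
      set j : Fin n := ⟨if i.val = 0 then 1 else 0, by split <;> omega⟩ with hj
      have hij : i ≠ j := by
        apply Fin.ne_of_val_ne
        simp only [hj]
        split <;> omega
      rw [← hint i j hij]
      exact inf_le_left
    set S : Submodule F ((Fin m → F) ⧸ C) := (⨆ i, π i).map C.mkQ with hS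
    have hCsup : C ≤ ⨆ i, π i := le_trans (hCle ⟨0, by omega⟩) (le_iSup π ⟨0, by omega⟩)
    have hSd : finrank F ↥S = d - k + t := by
      have := aux_finrank_map_mkQ (F := F) C (⨆ i, π i) hCsup
      rw [hC, hsup, ← hS] at this
      omega
    have he : finrank F ↥S = finrank F (Fin (d - k + t) → F) := by
      rw [hSd, Module.finrank_fin_fun]
    let e : ↥S ≃ₗ[F] (Fin (d - k + t) → F) := LinearEquiv.ofFinrankEq _ _ he
    have hle : ∀ i, (π i).map C.mkQ ≤ S := fun i =>
      Submodule.map_mono (le_iSup π i)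
    set τ : Fin n → Submodule F ↥S := fun i => ((π i).map C.mkQ).comap S.subtype with hτ
    have hmapτ : ∀ i, (τ i).map S.subtype = (π i).map C.mkQ := by
      intro i
      rw [hτ, Submodule.map_comap_subtype, inf_eq_right.mpr (hle i)]
    set σ : Fin n → Submodule F (Fin (d - k + t) → F) :=
      fun i => (τ i).map (e : ↥S →ₗ[F] (Fin (d - k + t) → F)) with hσ
    have hmkQbot : C.map C.mkQ = ⊥ := Submodule.mkQ_map_self C
    have hinfQ : ∀ i j, i ≠ j → (π i).map C.mkQ ⊓ (π j).map C.mkQ = ⊥ := by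
      intro i j hij
      have hcomap : Submodule.comap C.mkQ ((π i).map C.mkQ ⊓ (π j).map C.mkQ) = C := by
        rw [Submodule.comap_inf, Submodule.comap_map_mkQ, Submodule.comap_map_mkQ,
          sup_eq_right.mpr (hCle i), sup_eq_right.mpr (hCle j), hint i j hij]
      have := congrArg (Submodule.map C.mkQ) hcomap
      rwa [Submodule.map_comap_eq_of_surjective (Submodule.mkQ_surjective C), hmkQbot] at this
    have hinjmkQ : ∀ i j, (π i).map C.mkQ = (π j).map C.mkQ → i = j := by
      intro i j h
      have := congrArg (Submodule.comap C.mkQ) h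
      rw [Submodule.comap_map_mkQ, Submodule.comap_map_mkQ,
        sup_eq_right.mpr (hCle i), sup_eq_right.mpr (hCle j)] at this
      exact hinj this
    refine ⟨σ, ?_, ?_, ?_, ?_⟩
    · intro i j h
      apply hinjmkQ
      rw [← hmapτ i, ← hmapτ j]
      congr 1
      exact Submodule.map_injective_of_injective e.injective h
    · intro i
      have h1 : finrank F ↥(σ i) = finrank F ↥(τ i) := LinearEquiv.finrank_map_eq e (τ i)
      have h2 : finrank F ↥(τ i) = finrank F ↥((π i).map C.mkQ) :=
        (Submodule.comapSubtypeEquivOfLe (hle i)).finrank_eq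
      have h3 := aux_finrank_map_mkQ (F := F) C (π i) (hCle i)
      rw [hC, hdim i] at h3
      rw [h1, h2]
      omega
    · intro i j hij
      rw [hσ]
      simp only
      rw [← Submodule.map_inf (e : ↥S →ₗ[F] (Fin (d - k + t) → F)) e.injective, hτ]
      simp only
      rw [← Submodule.comap_inf, hinfQ i j hij]
      simp
    · have hsupτ : (⨆ i, τ i) = (⊤ : Submodule F ↥S) := by
        apply Submodule.map_injective_of_injective
          (show Function.Injective S.subtype from Subtype.coe_injective)
        rw [Submodule.map_iSup]
        simp only [hmapτ]
        rw [← Submodule.map_iSup, Submodule.map_subtype_top, hS]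
      rw [hσ]
      simp only
      rw [← Submodule.map_iSup, hsupτ, Submodule.map_top, LinearEquiv.range]
  · rintro ⟨σ, hinj, hdim, hint, hsup⟩
    haveI : Nonempty (Fin n) := ⟨⟨0, by omega⟩⟩
    set V := Fin (d - k + t) → F
    set W := Fin (k - t) → F
    have hP : finrank F (V × W) = finrank F (Fin d → F) := by
      rw [Module.finrank_prod, Module.finrank_fin_fun, Module.finrank_fin_fun,
        Module.finrank_fin_fun]
      omega
    let e : (V × W) ≃ₗ[F] (Fin d → F) := LinearEquiv.ofFinrankEq _ _ hP
    set π : Fin n → Submodule F (Fin d → F) :=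
      fun i => ((σ i).prod (⊤ : Submodule F W)).map (e : (V × W) →ₗ[F] (Fin d → F)) with hπ
    refine ⟨d, π, ((⊥ : Submodule F V).prod (⊤ : Submodule F W)).map
      (e : (V × W) →ₗ[F] (Fin d → F)), ?_, ?_, ?_, ?_, ?_⟩
    · intro i j h
      apply hinj
      have := Submodule.map_injective_of_injective e.injective h
      have := congrArg (Submodule.comap (LinearMap.inl F V W)) this
      rwa [Submodule.prod_comap_inl, Submodule.prod_comap_inl] at this
    · intro i
      rw [hπ]
      simp only
      rw [LinearEquiv.finrank_map_eq, aux_finrank_prod, hdim i, finrank_top,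
        Module.finrank_fin_fun]
      omega
    · rw [LinearEquiv.finrank_map_eq, aux_finrank_prod, finrank_bot, finrank_top,
        Module.finrank_fin_fun, zero_add]
    · intro i j hij
      rw [hπ]
      simp only
      rw [← Submodule.map_inf (e : (V × W) →ₗ[F] (Fin d → F)) e.injective, Submodule.prod_inf_prod, hint i j hij, top_inf_eq]
    · have hsupπ : (⨆ i, (σ i).prod (⊤ : Submodule F W)) = ⊤ := by
        simp only [LinearMap.prod_eq_sup_map]
        rw [iSup_sup_eq, ← Submodule.map_iSup, hsup, iSup_const,
          ← LinearMap.prod_eq_sup_map, Submodule.prod_top]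
      rw [hπ]
      simp only
      rw [← Submodule.map_iSup, hsupπ, Submodule.map_top, LinearEquiv.range, finrank_top,
        Module.finrank_fin_fun]
end

section
/- If 1 ≤ η ≤ n-2 and n ≤ (q^{t(n-η)} - 1)/(q^t - 1), then there exists a (k,k-t)-sunflower {π₁,...,πₙ} with dim S + dim I = 2k + (n-2)t - ηt, where S is the span of all elements and I is the span of all pairwise intersections (the center). -/
open Polynomial Module
open scoped LinearAlgebra.Projectivization



theorem my_exists_ext (F : Type u) [Field F] [Fintype F] (t : ℕ) (ht : t ≠ 0) :
    ∃ (K : Type u) (_ : Field K) (_ : Algebra F K) (_ : Fintype K),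
      Module.finrank F K = t := by
  classical
  obtain ⟨p, hc⟩ := CharP.exists F
  haveI : Fact p.Prime := ⟨CharP.char_is_prime F p⟩
  obtain ⟨a, hpp, hqa⟩ := FiniteField.card F p
  have hqt : (Fintype.card F) ^ t = p ^ (a * t) := by rw [hqa, ← pow_mul]
  have hat : (a : ℕ) * t ≠ 0 := by
    have := a.pos; positivity
  set g_poly := (X ^ p ^ ((a : ℕ) * t) - X : F[X]) with hg
  letI K := SplittingField g_poly
  haveI : CharP K p := charP_of_injective_algebraMap (algebraMap F K).injective p
  have hp : 1 < p := hpp.one_lt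
  haveI : Fintype K := Fintype.ofFinite K
  refine ⟨K, inferInstance, inferInstance, inferInstance, ?_⟩
  have aux : g_poly ≠ 0 := FiniteField.X_pow_card_pow_sub_X_ne_zero _ hat hp
  have key : Fintype.card (g_poly.rootSet K) = g_poly.natDegree :=
    card_rootSet_eq_natDegree (galois_poly_separable p _ (dvd_pow_self p hat))
      (SplittingField.splits g_poly)
  have nat_degree_eq : g_poly.natDegree = p ^ ((a : ℕ) * t) :=
    FiniteField.X_pow_card_pow_sub_X_natDegree_eq _ hat hp
  rw [nat_degree_eq] at key
  suffices g_poly.rootSet K = Set.univ by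
    simp_rw [this, ← Fintype.ofEquiv_card (Equiv.Set.univ _)] at key
    rw [@card_eq_pow_finrank F _ _ _ _ _ (_), ← hqt] at key
    exact Nat.pow_right_injective Fintype.one_lt_card key
  rw [Set.eq_univ_iff_forall]
  suffices ∀ (x) (_ : x ∈ (⊤ : Subalgebra F K)),
      x ∈ g_poly.rootSet K by simpa
  rw [← SplittingField.adjoin_rootSet]
  simp_rw [Algebra.mem_adjoin_iff]
  intro x hx
  refine Subring.closure_induction ?_ ?_ ?_ ?_ ?_ ?_ hx <;> simp_rw [mem_rootSet_of_ne aux]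
  · rintro x (⟨r, rfl⟩ | hx)
    · simp only [g_poly, map_sub, map_pow, aeval_X]
      have hr : r ^ p ^ ((a : ℕ) * t) = r := by
        have h2 := FiniteField.pow_card_pow (K := F) t r
        rwa [hqt] at h2
      rw [← map_pow, hr, sub_self]
    · rwa [mem_rootSet_of_ne aux] at hx
  · rw [← coeff_zero_eq_aeval_zero']
    simp only [g_poly, coeff_X_pow, coeff_X_zero, sub_zero, _root_.map_eq_zero, ite_eq_right_iff,
      one_ne_zero, coeff_sub]
    intro hn
    exact absurd ((pow_eq_zero_iff hat).mp hn.symm) (by omega)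
  · simp [g_poly]
  · simp only [g_poly, aeval_X_pow, aeval_X, map_sub, add_pow_char_pow, sub_eq_zero]
    intro x y _ _ hx hy
    rw [hx, hy]
  · intro x _ hx
    simp only [g_poly, sub_eq_zero, aeval_X_pow, aeval_X, map_sub, sub_neg_eq_add] at *
    rw [neg_pow, hx, neg_one_pow_char_pow]
    ring
  · simp only [g_poly, aeval_X_pow, aeval_X, map_sub, mul_pow, sub_eq_zero]
    intro x y _ _ hx hy
    rw [hx, hy]


theorem my_card_proj (K : Type*) [Field K] [Fintype K] (V : Type*) [AddCommGroup V]
    [Module K V] [Finite V] :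
    Nat.card (ℙ K V) * (Fintype.card K - 1) = Nat.card V - 1 := by
  classical
  haveI : Fintype V := Fintype.ofFinite V
  haveI : Finite (ℙ K V) := Quotient.finite _
  haveI : Fintype (ℙ K V) := Fintype.ofFinite _
  have h1 : Nat.card {v : V // v ≠ 0} = Nat.card V - 1 := by
    rw [Nat.card_eq_fintype_card, Nat.card_eq_fintype_card, Fintype.card_subtype_compl,
      Fintype.card_subtype_eq]
  rw [← h1]
  have e := Equiv.sigmaFiberEquiv (Projectivization.mk' K (V := V))
  rw [← Nat.card_congr e]
  simp only [Nat.card_eq_fintype_card]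
  rw [Fintype.card_sigma]
  rw [Finset.sum_congr rfl (fun x _ => ?_), Finset.sum_const, smul_eq_mul,
    Finset.card_univ]
  -- fiber ≃ Kˣ
  have hrep := x.rep_nonzero
  have : Fintype.card {w : {v : V // v ≠ 0} // Projectivization.mk' K w = x} = Fintype.card Kˣ := by
    apply Fintype.card_congr
    apply Equiv.symm
    refine Equiv.ofBijective (fun a =>
      ⟨⟨(a : K) • x.rep, smul_ne_zero a.ne_zero x.rep_nonzero⟩, ?_⟩) ⟨?_, ?_⟩
    · rw [Projectivization.mk'_eq_mk]
      conv_rhs => rw [← Projectivization.mk_rep x]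
      rw [Projectivization.mk_eq_mk_iff]
      exact ⟨a, rfl⟩
    · intro a b hab
      simp only [Subtype.mk.injEq] at hab
      exact Units.ext (smul_left_injective K hrep hab)
    · rintro ⟨⟨w, hw⟩, h⟩
      rw [Projectivization.mk'_eq_mk] at h
      conv_rhs at h => rw [← Projectivization.mk_rep x]
      rw [Projectivization.mk_eq_mk_iff] at h
      obtain ⟨u, hu⟩ := h
      refine ⟨u, Subtype.ext (Subtype.ext ?_)⟩
      simpa [Units.smul_def] using hu
  rw [this, Fintype.card_units]


theorem my_embed {X : Type*} [Fintype X] [DecidableEq X] (A : Finset X) (n : ℕ)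
    (hA : A.card ≤ n) (hn : n ≤ Fintype.card X) :
    ∃ f : Fin n ↪ X, (A : Set X) ⊆ Set.range f := by
  obtain ⟨B, hAB, -, hB⟩ := Finset.exists_subsuperset_card_eq A.subset_univ hA
    (by simpa using hn)
  have e : Fin n ≃ {x // x ∈ B} := (finCongr hB.symm).trans (Finset.equivFin B).symm
  refine ⟨⟨fun i => (e i : X), fun i j hij => e.injective (Subtype.ext hij)⟩, ?_⟩
  intro a ha
  exact ⟨e.symm ⟨a, hAB ha⟩, by show ((e (e.symm ⟨a, hAB ha⟩) : X)) = a; simp⟩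

theorem my_lines_disjoint {K V : Type*} [Field K] [AddCommGroup V] [Module K V]
    {L₁ L₂ : Submodule K V} (h₁ : finrank K L₁ = 1) (h₂ : finrank K L₂ = 1)
    (hne : L₁ ≠ L₂) : L₁ ⊓ L₂ = ⊥ := by
  by_contra hb
  haveI : FiniteDimensional K L₁ := FiniteDimensional.of_finrank_eq_succ h₁
  haveI : FiniteDimensional K L₂ := FiniteDimensional.of_finrank_eq_succ h₂
  have hle1 : L₁ ⊓ L₂ ≤ L₁ := inf_le_left
  have hle2 : L₁ ⊓ L₂ ≤ L₂ := inf_le_right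
  have hpos : 0 < finrank K ↥(L₁ ⊓ L₂) := by
    rw [Nat.pos_iff_ne_zero]
    intro h0
    exact hb (Submodule.finrank_eq_zero.mp h0)
  have hc1 : finrank K ↥(L₁ ⊓ L₂) ≤ 1 := h₁ ▸ Submodule.finrank_mono hle1
  have heq : finrank K ↥(L₁ ⊓ L₂) = 1 := le_antisymm hc1 hpos
  have e1 : L₁ ⊓ L₂ = L₁ := Submodule.eq_of_le_of_finrank_eq hle1 (by rw [heq, h₁])
  have e2 : L₁ ⊓ L₂ = L₂ := Submodule.eq_of_le_of_finrank_eq hle2 (by rw [heq, h₂])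
  exact hne (e1 ▸ e2)

def myProdEquiv {R M N : Type*} [Ring R] [AddCommGroup M] [AddCommGroup N] [Module R M]
    [Module R N] (p : Submodule R M) (q : Submodule R N) :
    ↥(p.prod q) ≃ₗ[R] ↥p × ↥q where
  toFun x := (⟨x.1.1, (Submodule.mem_prod.mp x.2).1⟩, ⟨x.1.2, (Submodule.mem_prod.mp x.2).2⟩)
  map_add' _ _ := rfl
  map_smul' _ _ := rfl
  invFun y := ⟨(y.1.1, y.2.1), Submodule.mem_prod.mpr ⟨y.1.2, y.2.2⟩⟩
  left_inv _ := rfl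
  right_inv _ := rfl

theorem my_finrank_prod {R M N : Type*} [DivisionRing R] [AddCommGroup M] [AddCommGroup N]
    [Module R M] [Module R N] (p : Submodule R M) (q : Submodule R N)
    [FiniteDimensional R p] [FiniteDimensional R q] :
    finrank R ↥(p.prod q) = finrank R p + finrank R q := by
  rw [LinearEquiv.finrank_eq (myProdEquiv p q), Module.finrank_prod]


theorem sunflower_spectrum_exists (F : Type*) [Field F] [Fintype F]
    (n k t η : ℕ) (hn : 3 ≤ n) (ht : 1 ≤ t) (htk : t ≤ k)
    (hη₁ : 1 ≤ η) (hη₂ : η ≤ n - 2)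
    (hcard : n ≤ ((Fintype.card F) ^ (t * (n - η)) - 1) / ((Fintype.card F) ^ t - 1)) :
    ∃ (m : ℕ) (π : Fin n → Submodule F (Fin m → F)) (C : Submodule F (Fin m → F)),
      Function.Injective π ∧
      (∀ i, finrank F ↥(π i) = k) ∧
      finrank F ↥C = k - t ∧
      (∀ i j, i ≠ j → π i ⊓ π j = C) ∧
      finrank F ↥(⨆ i, π i) +
        finrank F ↥(⨆ i, ⨆ j, ⨆ (_ : i < j), π i ⊓ π j) =
          2 * k + (n - 2) * t - η * t := by
  classical
  obtain ⟨K, fK, aK, ftK, hrK⟩ := my_exists_ext F t (by omega)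
  letI := fK; letI := aK; letI := ftK
  set s := n - η with hs
  have hs2 : 2 ≤ s := by omega
  have hq : 1 < Fintype.card F := Fintype.one_lt_card
  haveI : FiniteDimensional F K := Module.Finite.of_finite -- TOFIX
  have hfinQK : finrank K (Fin s → K) = s := by
    rw [Module.finrank_pi]; simp
  have hfinQF : finrank F (Fin s → K) = t * s := by
    rw [← Module.finrank_mul_finrank F K (Fin s → K), hrK, hfinQK]
  have hcardK : Fintype.card K = Fintype.card F ^ t := by
    rw [card_eq_pow_finrank (K := F) (V := K), hrK]
  have hK2 : 1 < Fintype.card K := Fintype.one_lt_card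
  haveI : Finite (ℙ K (Fin s → K)) := Quotient.finite _
  haveI : Fintype (ℙ K (Fin s → K)) := Fintype.ofFinite _
  have hcards := my_card_proj K (Fin s → K)
  have hcardQ : Nat.card (Fin s → K) = Fintype.card F ^ (t * s) := by
    rw [Nat.card_eq_fintype_card, Fintype.card_fun, hcardK, ← pow_mul, Fintype.card_fin]
  have hn_le : n ≤ Fintype.card (ℙ K (Fin s → K)) := by
    calc n ≤ (Fintype.card F ^ (t * s) - 1) / (Fintype.card F ^ t - 1) := hcard
    _ = (Nat.card (ℙ K (Fin s → K)) * (Fintype.card K - 1)) / (Fintype.card K - 1) := by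
        rw [hcards, hcardQ, hcardK]
    _ = Nat.card (ℙ K (Fin s → K)) := Nat.mul_div_cancel _ (by omega)
    _ = Fintype.card (ℙ K (Fin s → K)) := Nat.card_eq_fintype_card
  have hsingle : ∀ j : Fin s, (Pi.single j (1:K) : Fin s → K) ≠ 0 := by
    intro j h0
    have := congrFun h0 j
    rw [Pi.single_eq_same] at this
    exact one_ne_zero this
  set A : Finset (ℙ K (Fin s → K)) :=
    Finset.univ.image (fun j : Fin s => Projectivization.mk K (Pi.single j (1:K)) (hsingle j))
    with hA
  have hAcard : A.card ≤ n := by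
    refine le_trans Finset.card_image_le ?_
    simp only [Finset.card_univ, Fintype.card_fin]
    omega
  obtain ⟨g, hg⟩ := my_embed A n hAcard hn_le
  set L : Fin n → Submodule K (Fin s → K) := fun i => (g i).submodule with hLdef
  have hL1 : ∀ i, finrank K (L i) = 1 := fun i => (g i).finrank_submodule
  have hLinj : Function.Injective L := fun i j h =>
    g.injective (Projectivization.submodule_injective h)
  have hLdisj : ∀ i j, i ≠ j → L i ⊓ L j = ⊥ := fun i j hij =>
    my_lines_disjoint (hL1 i) (hL1 j) (fun h => hij (hLinj h))
  set V : Fin n → Submodule F (Fin s → K) := fun i => (L i).restrictScalars F with hVdef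
  have hVrank : ∀ i, finrank F (V i) = t := by
    intro i
    rw [LinearEquiv.finrank_eq ((Submodule.restrictScalarsEquiv F K _ (L i)).restrictScalars F),
      ← Module.finrank_mul_finrank F K (L i), hrK, hL1 i, mul_one]
  have hVinj : Function.Injective V := fun i j h =>
    hLinj (Submodule.restrictScalars_injective F K _ h)
  have hVdisj : ∀ i j, i ≠ j → V i ⊓ V j = ⊥ := by
    intro i j hij
    rw [eq_bot_iff]
    intro x hx
    have hm : x ∈ L i ⊓ L j :=
      Submodule.mem_inf.mpr ⟨(Submodule.mem_inf.mp hx).1, (Submodule.mem_inf.mp hx).2⟩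
    rw [hLdisj i j hij] at hm
    simpa using hm
  have hVsup : (⨆ i, V i) = ⊤ := by
    rw [eq_top_iff]
    rintro x -
    rw [← Finset.univ_sum_single x]
    apply Submodule.sum_mem
    intro j _
    have hjA : Projectivization.mk K (Pi.single j (1:K)) (hsingle j) ∈ A := by
      rw [hA]
      exact Finset.mem_image_of_mem _ (Finset.mem_univ j)
    obtain ⟨ij, hij⟩ := hg hjA
    refine Submodule.mem_iSup_of_mem ij ?_
    show Pi.single j (x j) ∈ (L ij).restrictScalars F
    rw [Submodule.restrictScalars_mem, hLdef]
    simp only [hij, Projectivization.submodule_mk]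
    refine Submodule.mem_span_singleton.mpr ⟨x j, ?_⟩
    ext m
    by_cases hmj : m = j <;> simp [Pi.single_apply, hmj]
  -- the ambient product module
  set πM : Fin n → Submodule F ((Fin (k - t) → F) × (Fin s → K)) :=
    fun i => (⊤ : Submodule F (Fin (k - t) → F)).prod (V i) with hπM
  set CM : Submodule F ((Fin (k - t) → F) × (Fin s → K)) :=
    (⊤ : Submodule F (Fin (k - t) → F)).prod ⊥ with hCM
  have hCMrank : finrank F CM = k - t := by
    rw [hCM, my_finrank_prod, finrank_top, Module.finrank_pi, finrank_bot]
    simp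
  have hπMrank : ∀ i, finrank F (πM i) = k := by
    intro i
    rw [hπM, my_finrank_prod, finrank_top, Module.finrank_pi, hVrank i]
    simp only [Fintype.card_fin]
    omega
  have hπMinf : ∀ i j, i ≠ j → πM i ⊓ πM j = CM := by
    intro i j hij
    rw [hπM, hCM, Submodule.prod_inf_prod, hVdisj i j hij, top_inf_eq]
  have hπMinj : Function.Injective πM := by
    intro i j h
    apply hVinj
    ext x
    constructor <;> intro hx
    · have hx2 : ((0 : Fin (k - t) → F), x) ∈ πM i :=
        Submodule.mem_prod.mpr ⟨Submodule.mem_top, hx⟩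
      rw [h] at hx2
      exact (Submodule.mem_prod.mp hx2).2
    · have hx2 : ((0 : Fin (k - t) → F), x) ∈ πM j :=
        Submodule.mem_prod.mpr ⟨Submodule.mem_top, hx⟩
      rw [← h] at hx2
      exact (Submodule.mem_prod.mp hx2).2
  have hπMsup : (⨆ i, πM i) = ⊤ := by
    rw [eq_top_iff]
    rintro ⟨xp, xq⟩ -
    have i0 : Fin n := ⟨0, by omega⟩
    have h1 : ((xp, 0) : (Fin (k - t) → F) × (Fin s → K)) ∈ πM i0 :=
      Submodule.mem_prod.mpr ⟨Submodule.mem_top, Submodule.zero_mem _⟩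
    have h2 : ((0, xq) : (Fin (k - t) → F) × (Fin s → K)) ∈ ⨆ i, πM i := by
      have hxq : xq ∈ ⨆ i, V i := by rw [hVsup]; exact Submodule.mem_top
      refine Submodule.iSup_induction V (motive := fun v =>
        ((0, v) : (Fin (k - t) → F) × (Fin s → K)) ∈ ⨆ i, πM i) hxq ?_ ?_ ?_
      · intro i v hv
        exact Submodule.mem_iSup_of_mem i (Submodule.mem_prod.mpr ⟨Submodule.mem_top, hv⟩)
      · exact Submodule.zero_mem _
      · intro a b ha hb
        simpa using Submodule.add_mem _ ha hb
    have hsplit : ((xp, xq) : (Fin (k - t) → F) × (Fin s → K)) = (xp, 0) + (0, xq) := by simp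
    rw [hsplit]
    exact Submodule.add_mem _ (Submodule.mem_iSup_of_mem i0 h1) h2
  -- transport to Fin m → F
  have hMrank : finrank F ((Fin (k - t) → F) × (Fin s → K)) = k - t + t * s := by
    rw [Module.finrank_prod, Module.finrank_pi, hfinQF]
    simp
  have e : ((Fin (k - t) → F) × (Fin s → K)) ≃ₗ[F] (Fin (k - t + t * s) → F) :=
    LinearEquiv.ofFinrankEq _ _ (by rw [hMrank, Module.finrank_pi]; simp)
  refine ⟨k - t + t * s, fun i => (πM i).map e.toLinearMap, CM.map e.toLinearMap,
    ?_, ?_, ?_, ?_, ?_⟩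
  · intro i j h
    exact hπMinj (Submodule.map_injective_of_injective e.injective h)
  · intro i
    rw [LinearEquiv.finrank_map_eq]
    exact hπMrank i
  · rw [LinearEquiv.finrank_map_eq]
    exact hCMrank
  · intro i j hij
    rw [← Submodule.map_inf e.toLinearMap e.injective, hπMinf i j hij]
  · have hsup2 : (⨆ i, (πM i).map e.toLinearMap) = ⊤ := by
      rw [← Submodule.map_iSup, hπMsup, Submodule.map_top, LinearEquiv.range]
    have hpair : ∀ i j : Fin n, i ≠ j →
        (πM i).map e.toLinearMap ⊓ (πM j).map e.toLinearMap = CM.map e.toLinearMap := by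
      intro i j hij
      rw [← Submodule.map_inf e.toLinearMap e.injective, hπMinf i j hij]
    have h0 : 0 < n := by omega
    have h1 : 1 < n := by omega
    set i0 : Fin n := ⟨0, h0⟩ with hi0
    set i1 : Fin n := ⟨1, h1⟩ with hi1
    have h01 : i0 < i1 := by simp [hi0, hi1, Fin.lt_def]
    have hne : i0 ≠ i1 := Fin.ne_of_lt h01
    have hT : (⨆ i, ⨆ j, ⨆ (_ : i < j), (πM i).map e.toLinearMap ⊓ (πM j).map e.toLinearMap)
        = CM.map e.toLinearMap := by
      apply le_antisymm
      · exact iSup_le fun i => iSup_le fun j => iSup_le fun hij =>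
          le_of_eq (hpair i j (Fin.ne_of_lt hij))
      · calc CM.map e.toLinearMap
            = (πM i0).map e.toLinearMap ⊓ (πM i1).map e.toLinearMap := (hpair i0 i1 hne).symm
          _ ≤ ⨆ (_ : i0 < i1), (πM i0).map e.toLinearMap ⊓ (πM i1).map e.toLinearMap :=
            le_iSup (fun _ => (πM i0).map e.toLinearMap ⊓ (πM i1).map e.toLinearMap) h01
          _ ≤ ⨆ j, ⨆ (_ : i0 < j), (πM i0).map e.toLinearMap ⊓ (πM j).map e.toLinearMap :=
            le_iSup (fun j => ⨆ (_ : i0 < j),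
              (πM i0).map e.toLinearMap ⊓ (πM j).map e.toLinearMap) i1
          _ ≤ _ := le_iSup (fun i => ⨆ j, ⨆ (_ : i < j),
              (πM i).map e.toLinearMap ⊓ (πM j).map e.toLinearMap) i0
    rw [hsup2, hT, finrank_top, Module.finrank_pi, LinearEquiv.finrank_map_eq, hCMrank,
      Fintype.card_fin]
    have hts : t * s = (n - 2 - η) * t + 2 * t := by
      have h2 : n - 2 - η + 2 = s := by omega
      calc t * s = (n - 2 - η + 2) * t := by rw [mul_comm, h2]
        _ = (n - 2 - η) * t + 2 * t := add_mul _ _ _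
    have hnt : (n - 2) * t = (n - 2 - η) * t + η * t := by
      have h3 : n - 2 - η + η = n - 2 := by omega
      conv_lhs => rw [← h3]
      rw [add_mul]
    rw [hts, hnt]
    generalize (n - 2 - η) * t = X
    generalize η * t = Y
    omega
end

section
/- For any (k,k-t)-SCID {π₁,...,πₙ} with n ≥ 2 and t ≥ 1, we have dim S + dim I ≥ 2k, where S is the span of all elements and I the span of all pairwise intersections. -/
open Module

theorem scid_lower_bound (F V : Type*) [Field F] [Fintype F]
    [AddCommGroup V] [Module F V] [FiniteDimensional F V]
    (n k t : ℕ) (hn : 2 ≤ n) (ht : 1 ≤ t) (htk : t ≤ k)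
    (π : Fin n → Submodule F V) (hinj : Function.Injective π)
    (hdim : ∀ i, finrank F ↥(π i) = k)
    (hint : ∀ i j, i ≠ j → finrank F ↥(π i ⊓ π j) = k - t) :
    2 * k ≤ finrank F ↥(⨆ i, π i) +
      finrank F ↥(⨆ i, ⨆ j, ⨆ (_ : i < j), π i ⊓ π j) := by
  haveI : NeZero n := ⟨by omega⟩
  have h01 : (0 : Fin n) < 1 := by
    rw [Fin.lt_def]
    simp [Fin.val_one', Nat.mod_eq_of_lt (by omega : 1 < n)]
  have hne : (0 : Fin n) ≠ 1 := ne_of_lt h01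
  have hsup : finrank F ↥(π 0 ⊔ π 1) = k + t := by
    have := Submodule.finrank_sup_add_finrank_inf_eq (π 0) (π 1)
    rw [hdim 0, hdim 1, hint 0 1 hne] at this
    omega
  have h1 : finrank F ↥(π 0 ⊔ π 1) ≤ finrank F ↥(⨆ i, π i) := by
    apply Submodule.finrank_mono
    exact sup_le (le_iSup π 0) (le_iSup π 1)
  have h2 : finrank F ↥(π 0 ⊓ π 1) ≤
      finrank F ↥(⨆ i, ⨆ j, ⨆ (_ : i < j), π i ⊓ π j) := by
    apply Submodule.finrank_mono
    exact le_iSup_of_le 0 (le_iSup_of_le 1 (le_iSup_of_le h01 le_rfl))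
  rw [hsup] at h1
  rw [hint 0 1 hne] at h2
  omega
end
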